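/- arXiv:1603.06625 — 6 statements merged into one kernel-verified Lean document; each statement's English description precedes it below -/
import Mathlib

section
/- Let N = 2n and let d_1, ..., d_n be units of Z/N. Then there exist signs s_1, ..., s_n in {1, -1} such that s_1 d_1 + ... + s_n d_n ≡ n (mod 2n). -/
open Finset

lemma sw_closure_univ {n : ℕ} (hn : 0 < n) (A : Finset (ZMod n)) (h0 : (0 : ZMod n) ∈ A)
    {u : ZMod n} (hu : IsUnit u) (hcl : ∀ x ∈ A, x + u ∈ A) : ∀ y : ZMod n, y ∈ A := by
  haveI : NeZero n := ⟨hn.ne'⟩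
  have hk : ∀ k : ℕ, (k : ZMod n) * u ∈ A := by
    intro k
    induction k with
    | zero => simpa using h0
    | succ k ih =>
      have := hcl _ ih
      push_cast
      rw [add_mul, one_mul]
      exact this
  intro y
  obtain ⟨v, hv⟩ := hu
  have h1 : (((y * ↑v⁻¹).val : ℕ) : ZMod n) = y * ↑v⁻¹ := by
    simp [ZMod.natCast_val, ZMod.cast_id]
  have := hk (y * ↑v⁻¹).val
  rw [h1, ← hv, mul_assoc, Units.inv_mul, mul_one] at this
  exact this

lemma sw_growth {n : ℕ} (hn : 0 < n) {ι : Type*} [DecidableEq ι]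
    (d : ι → ZMod n) (s : Finset ι) (hd : ∀ i ∈ s, IsUnit (d i)) :
    min n (s.card + 1) ≤ ((s.powerset).image (fun T => ∑ i ∈ T, d i)).card := by
  haveI : NeZero n := ⟨hn.ne'⟩
  classical
  induction s using Finset.induction_on with
  | empty =>
    simp only [powerset_empty, image_singleton, sum_empty, card_singleton, card_empty]
    exact min_le_right _ _
  | @insert a s ha ih =>
    set A := (s.powerset).image (fun T => ∑ i ∈ T, d i) with hA
    set B := ((insert a s).powerset).image (fun T => ∑ i ∈ T, d i) with hB
    have hAB : A ⊆ B := by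
      apply image_subset_image
      exact powerset_mono.mpr (subset_insert a s)
    have hshift : ∀ x ∈ A, x + d a ∈ B := by
      intro x hx
      simp only [hA, mem_image, mem_powerset] at hx
      obtain ⟨T, hT, rfl⟩ := hx
      simp only [hB, mem_image, mem_powerset]
      refine ⟨insert a T, insert_subset_insert a hT, ?_⟩
      rw [sum_insert (fun h => ha (hT h)), add_comm]
    have ihA := ih (fun i hi => hd i (mem_insert_of_mem hi))
    by_cases hfull : n ≤ A.card
    · exact le_trans (min_le_left _ _) (le_trans hfull (card_le_card hAB))
    · push_neg at hfull
      have hcardA : s.card + 1 ≤ A.card := by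
        rcases min_cases n (s.card + 1) with ⟨h1, h2⟩ | ⟨h1, h2⟩
        · omega
        · omega
      by_cases hcl : ∀ x ∈ A, x + d a ∈ A
      · have h0 : (0 : ZMod n) ∈ A := by
          simp only [hA, mem_image, mem_powerset]
          exact ⟨∅, empty_subset _, sum_empty⟩
        have := sw_closure_univ hn A h0 (hd a (mem_insert_self a s)) hcl
        have : n ≤ A.card := by
          have : (Finset.univ : Finset (ZMod n)) ⊆ A := fun y _ => this y
          calc n = (Finset.univ : Finset (ZMod n)).card := by simp [ZMod.card]
            _ ≤ A.card := card_le_card this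
        omega
      · push_neg at hcl
        obtain ⟨x, hx, hxa⟩ := hcl
        have hsub : insert (x + d a) A ⊆ B := by
          apply insert_subset (hshift x hx) hAB
        have : A.card + 1 ≤ B.card := by
          rw [← card_insert_of_notMem hxa]
          exact card_le_card hsub
        rw [card_insert_of_notMem ha]
        omega

lemma sw_subsetSum {n : ℕ} (hn : 0 < n) {ι : Type*} [DecidableEq ι]
    (d : ι → ZMod n) (s : Finset ι) (hd : ∀ i ∈ s, IsUnit (d i)) (hcard : n ≤ s.card)
    (c : ZMod n) : ∃ T ⊆ s, ∑ i ∈ T, d i = c := by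
  haveI : NeZero n := ⟨hn.ne'⟩
  have h := sw_growth hn d s hd
  set A := (s.powerset).image (fun T => ∑ i ∈ T, d i) with hA
  have hmin : min n (s.card + 1) = n := by omega
  rw [hmin] at h
  have hle : A.card ≤ n := by
    have := card_le_univ A
    simpa [ZMod.card] using this
  have huniv : A = Finset.univ := Finset.eq_univ_of_card A (by simp [ZMod.card]; omega)
  have hc : c ∈ A := huniv ▸ Finset.mem_univ c
  simp only [hA, mem_image, mem_powerset] at hc
  obtain ⟨T, hT, hsum⟩ := hc
  exact ⟨T, hT, hsum⟩

lemma sw_two_mul {n : ℕ} (hn : 0 < n) (x y : ZMod (2*n))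
    (h : (ZMod.castHom (dvd_mul_left n 2) (ZMod n)) x =
         (ZMod.castHom (dvd_mul_left n 2) (ZMod n)) y) :
    2*x = 2*y := by
  haveI : NeZero (2*n) := ⟨by omega⟩
  haveI : NeZero n := ⟨hn.ne'⟩
  have hx : ((x.val : ℕ) : ZMod (2*n)) = x := by simp [ZMod.natCast_val, ZMod.cast_id]
  have hy : ((y.val : ℕ) : ZMod (2*n)) = y := by simp [ZMod.natCast_val, ZMod.cast_id]
  have h' : ((x.val : ℕ) : ZMod n) = ((y.val : ℕ) : ZMod n) := by
    rw [ZMod.natCast_val, ZMod.natCast_val]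
    simpa [ZMod.castHom_apply] using h
  have hmod : x.val ≡ y.val [MOD n] := (ZMod.natCast_eq_natCast_iff _ _ _).mp h'
  have hmod2 : 2 * x.val ≡ 2 * y.val [MOD 2*n] := hmod.mul_left' 2
  have := (ZMod.natCast_eq_natCast_iff _ _ _).mpr hmod2
  push_cast at this
  rw [hx, hy] at this
  exact this

theorem signed_sum_units (n : ℕ) (hn : 0 < n) (d : Fin n → ZMod (2 * n))
    (hd : ∀ i, IsUnit (d i)) :
    ∃ s : Fin n → ℤ, (∀ i, s i = 1 ∨ s i = -1) ∧
      ∑ i, (s i) • d i = (n : ZMod (2 * n)) := by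
  haveI : NeZero (2*n) := ⟨by omega⟩
  haveI : NeZero n := ⟨hn.ne'⟩
  have hone : ∀ v : ZMod 2, IsUnit v → v = 1 := by decide
  set S := ∑ i, d i with hS
  have hS2 : (ZMod.castHom (dvd_mul_right 2 n) (ZMod 2)) S = (n : ZMod 2) := by
    rw [hS, map_sum, Finset.sum_congr rfl (fun i _ => hone _ ((hd i).map _))]
    simp
  set e := S - (n : ZMod (2*n)) with he
  have he2 : (ZMod.castHom (dvd_mul_right 2 n) (ZMod 2)) e = 0 := by
    rw [he, map_sub, hS2, map_natCast]; ring
  have hev : 2 ∣ e.val := by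
    have h1 : ((e.val : ℕ) : ZMod 2) = 0 := by
      rw [ZMod.natCast_val, ← ZMod.castHom_apply (h := dvd_mul_right 2 n) e]
      exact he2
    exact (ZMod.natCast_eq_zero_iff _ _).mp h1
  obtain ⟨f, hf⟩ := hev
  obtain ⟨T, -, hTsum⟩ := sw_subsetSum hn
    (fun i => (ZMod.castHom (dvd_mul_left n 2) (ZMod n)) (d i)) Finset.univ
    (fun i _ => (hd i).map _) (by simp) (f : ZMod n)
  have hcast : (ZMod.castHom (dvd_mul_left n 2) (ZMod n)) (∑ i ∈ T, d i)
      = (ZMod.castHom (dvd_mul_left n 2) (ZMod n)) ((f : ZMod (2*n))) := by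
    rw [map_sum, map_natCast]
    exact hTsum
  have key : 2 * ∑ i ∈ T, d i = 2 * (f : ZMod (2*n)) := sw_two_mul hn _ _ hcast
  have hfe : 2 * (f : ZMod (2*n)) = e := by
    have h2 : ((e.val : ℕ) : ZMod (2*n)) = e := by simp [ZMod.natCast_val, ZMod.cast_id]
    rw [← h2, hf]
    push_cast; ring
  refine ⟨fun i => if i ∈ T then (-1 : ℤ) else 1,
    fun i => by by_cases h : i ∈ T <;> simp [h], ?_⟩
  have hsplit : ∑ i, (if i ∈ T then (-1 : ℤ) else 1) • d i
      = ∑ i, (d i - (if i ∈ T then 2 * d i else 0)) := by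
    apply Finset.sum_congr rfl
    intro i _
    by_cases h : i ∈ T <;> simp [h] <;> ring
  rw [hsplit, Finset.sum_sub_distrib]
  have hT2 : ∑ i, (if i ∈ T then 2 * d i else 0) = 2 * ∑ i ∈ T, d i := by
    rw [Finset.mul_sum, Finset.sum_ite_mem, Finset.univ_inter]
  rw [hT2, key, hfe, he, ← hS]
  ring
end

section
/- Let n be a positive integer and d_1, ..., d_n elements of Z/n that are each coprime to n (units of Z/n). Then the set of all subset sums { sum over i in I of d_i : I subset of {1,...,n} } equals all of Z/n. -/
theorem subset_sums_cover (n : ℕ) (hn : 0 < n) (d : Fin n → ZMod n)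
    (hd : ∀ i, IsUnit (d i)) :
    ∀ x : ZMod n, ∃ I : Finset (Fin n), ∑ i ∈ I, d i = x := by
  haveI : NeZero n := ⟨hn.ne'⟩
  -- closure lemma
  have clo : ∀ (u : ZMod n), IsUnit u → ∀ (T : Finset (ZMod n)), 0 ∈ T →
      (∀ x ∈ T, u + x ∈ T) → ∀ y : ZMod n, y ∈ T := by
    intro u hu T h0 hstep y
    obtain ⟨v, hv⟩ := hu
    have step : ∀ m : ℕ, (m : ZMod n) * u ∈ T := by
      intro m
      induction m with
      | zero => simpa using h0
      | succ k ih =>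
        have := hstep _ ih
        have heq : ((k + 1 : ℕ) : ZMod n) * u = u + (k : ZMod n) * u := by
          push_cast; ring
        rw [heq]; exact this
    have : ((y * ↑v⁻¹).val : ZMod n) * u = y := by
      rw [ZMod.natCast_val, ZMod.cast_id, ← hv, mul_assoc, Units.inv_mul, mul_one]
    rw [← this]; exact step _
  set B : Finset (Fin n) → Finset (ZMod n) :=
    fun s => s.powerset.image (fun I => ∑ i ∈ I, d i) with hB
  have hBins : ∀ (a : Fin n) (s : Finset (Fin n)), a ∉ s →
      B (insert a s) = B s ∪ (B s).image (fun x => d a + x) := by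
    intro a s ha
    rw [hB]
    simp only
    rw [Finset.powerset_insert, Finset.image_union, Finset.image_image,
      Finset.image_image]
    congr 1
    apply Finset.image_congr
    intro I hI
    simp only [Finset.mem_coe, Finset.mem_powerset] at hI
    simp only [Function.comp_apply]
    rw [Finset.sum_insert (fun h => ha (hI h))]
  have key : ∀ s : Finset (Fin n), min n (s.card + 1) ≤ (B s).card := by
    intro s
    induction s using Finset.induction_on with
    | empty =>
      have : (0 : ZMod n) ∈ B ∅ := by
        simp [hB]
      have h1 : 1 ≤ (B ∅).card := Finset.card_pos.mpr ⟨0, this⟩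
      simpa using le_trans (min_le_right _ _) h1
    | @insert a s ha ih =>
      by_cases hlt : (B s).card < n
      · have hmin : s.card + 1 ≤ (B s).card := by
          rcases min_cases n (s.card + 1) with ⟨h1, h2⟩ | ⟨h1, h2⟩
          · omega
          · omega
        have hsub : B s ⊆ B (insert a s) := by
          rw [hBins a s ha]; exact Finset.subset_union_left
        have hne : ∃ x ∈ B s, d a + x ∉ B s := by
          by_contra h
          push_neg at h
          have h0 : (0 : ZMod n) ∈ B s := by
            simp only [hB, Finset.mem_image, Finset.mem_powerset]
            exact ⟨∅, Finset.empty_subset _, Finset.sum_empty⟩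
          have := clo (d a) (hd a) (B s) h0 h
          have : (Finset.univ : Finset (ZMod n)) ⊆ B s := fun y _ => this y
          have := Finset.card_le_card this
          simp [ZMod.card] at this
          omega
        obtain ⟨x, hx, hnx⟩ := hne
        have hmem : d a + x ∈ B (insert a s) := by
          rw [hBins a s ha]
          exact Finset.mem_union_right _ (Finset.mem_image_of_mem _ hx)
        have hssub : B s ⊂ B (insert a s) := ⟨hsub, fun h => hnx (h hmem)⟩
        have := Finset.card_lt_card hssub
        rw [Finset.card_insert_of_notMem ha]
        omega
      · push_neg at hlt
        have hsub : B s ⊆ B (insert a s) := by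
          rw [hBins a s ha]; exact Finset.subset_union_left
        have := Finset.card_le_card hsub
        calc min n ((insert a s).card + 1) ≤ n := min_le_left _ _
          _ ≤ (B (insert a s)).card := le_trans hlt this
  intro x
  have huniv : (B Finset.univ).card = n := by
    have h1 := key Finset.univ
    have h2 : (B Finset.univ).card ≤ n := by
      have := Finset.card_le_card (Finset.subset_univ (B Finset.univ))
      simpa [ZMod.card] using this
    have : min n ((Finset.univ : Finset (Fin n)).card + 1) = n := by
      simp [min_eq_left]
    omega
  have : B Finset.univ = Finset.univ := by
    apply Finset.eq_univ_of_card
    simp [huniv, ZMod.card]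
  have hx : x ∈ B Finset.univ := this ▸ Finset.mem_univ x
  rw [hB] at hx
  simp only [Finset.mem_image, Finset.mem_powerset] at hx
  obtain ⟨I, _, hI⟩ := hx
  exact ⟨I, hI⟩
end

section
/- (Cauchy–Davenport variant) Let N be a positive integer and let A, B be nonempty subsets of Z/N such that 0 ∈ B and every nonzero element b of B satisfies gcd(b, N) = 1. Then |A + B| ≥ min(N, |A| + |B| - 1). -/
open scoped Pointwise

open Finset

/-- If a nonempty set in `ZMod N` is closed under adding a unit `b`, it is everything. -/
lemma chowla_closed_univ {N : ℕ} [NeZero N] (hN : 0 < N) (A : Finset (ZMod N)) (hA : A.Nonempty)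
    (b : ZMod N) (hb : IsUnit b) (hcl : ∀ a ∈ A, a + b ∈ A) : A = Finset.univ := by
  obtain ⟨a, ha⟩ := hA
  have hk : ∀ k : ℕ, a + k * b ∈ A := by
    intro k
    induction k with
    | zero => simpa using ha
    | succ k ih =>
      have := hcl _ ih
      convert this using 1
      push_cast
      ring
  apply Finset.eq_univ_of_forall
  intro x
  obtain ⟨u, hu⟩ := hb
  have hx : x = a + (((x - a) * (↑u⁻¹ : ZMod N)).val : ℕ) * b := by
    rw [ZMod.natCast_val, ZMod.cast_id]
    have : (↑u⁻¹ : ZMod N) * b = 1 := by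
      rw [← hu, ← Units.val_mul, inv_mul_cancel, Units.val_one]
    rw [mul_assoc, this, mul_one]
    ring
  rw [hx]
  exact hk _

lemma chowla_aux (N : ℕ) (hN : 0 < N) : ∀ n : ℕ, ∀ A B : Finset (ZMod N), B.card ≤ n →
    A.Nonempty → (0 : ZMod N) ∈ B → (∀ b ∈ B, b ≠ 0 → IsUnit b) →
    min N (A.card + B.card - 1) ≤ (A + B).card := by
  haveI : NeZero N := ⟨hN.ne'⟩
  intro n
  induction n with
  | zero =>
    intro A B hcard _ hB _
    exact absurd (Finset.card_pos.2 ⟨0, hB⟩) (by omega)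
  | succ n ih =>
    intro A B hcard hA hB hunit
    by_cases hB0 : B = {0}
    · subst hB0
      have hAB : A + {(0 : ZMod N)} = A := by
        simp [Finset.add_singleton]
      rw [hAB]
      have hAle : A.card ≤ N := by
        simpa [ZMod.card] using Finset.card_le_univ A
      simp only [Finset.card_singleton]
      omega
    by_cases hex : ∃ a ∈ A, ∃ c ∈ B, a + c ∉ A
    · obtain ⟨a, ha, c, hc, hac⟩ := hex
      set imB := B.image (a + ·) with himB
      set A' := A ∪ imB with hA'
      set B' := B.filter (fun y => a + y ∈ A) with hB'
      have hinj : Set.InjOn (a + ·) B := fun x _ y _ h => by simpa using h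
      have himcard : imB.card = B.card := Finset.card_image_of_injOn hinj
      -- B'.image (a + ·) = A ∩ imB
      have key : B'.image (a + ·) = A ∩ imB := by
        ext x
        simp only [hB', Finset.mem_image, Finset.mem_filter, Finset.mem_inter, himB]
        constructor
        · rintro ⟨y, ⟨hy, hay⟩, rfl⟩
          exact ⟨hay, y, hy, rfl⟩
        · rintro ⟨hxA, y, hy, rfl⟩
          exact ⟨y, ⟨hy, hxA⟩, rfl⟩
      have hB'card : B'.card = (A ∩ imB).card := by
        rw [← key]
        exact (Finset.card_image_of_injOn (hinj.mono (Finset.filter_subset _ _))).symm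
      have hsum : A'.card + B'.card = A.card + B.card := by
        have := Finset.card_union_add_card_inter A imB
        rw [hA', hB'card]
        omega
      have hB'0 : (0 : ZMod N) ∈ B' := by
        simp only [hB', Finset.mem_filter]
        exact ⟨hB, by simpa using ha⟩
      have hB'lt : B'.card ≤ n := by
        have hss : B' ⊂ B := by
          refine Finset.ssubset_iff_of_subset (Finset.filter_subset _ _) |>.2 ⟨c, hc, ?_⟩
          simp [hB', hac]
        have := Finset.card_lt_card hss
        omega
      have hsub : A' + B' ⊆ A + B := by
        intro x hx
        rw [Finset.mem_add] at hx ⊢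
        obtain ⟨u, hu, v, hv, rfl⟩ := hx
        simp only [hB', Finset.mem_filter] at hv
        rw [hA', Finset.mem_union] at hu
        rcases hu with hu | hu
        · exact ⟨u, hu, v, hv.1, rfl⟩
        · simp only [himB, Finset.mem_image] at hu
          obtain ⟨y, hy, rfl⟩ := hu
          exact ⟨a + v, hv.2, y, hy, by ring⟩
      have hrec := ih A' B' hB'lt ⟨a, by simp only [hA', Finset.mem_union]; exact Or.inl ha⟩ hB'0
        (fun b hb hbne => hunit b (Finset.mem_of_mem_filter b hb) hbne)
      rw [hsum] at hrec
      exact le_trans (hrec) (Finset.card_le_card hsub)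
    · push_neg at hex
      -- A is closed under adding every element of B; pick a nonzero (unit) element
      obtain ⟨b, hbB, hbne⟩ : ∃ b ∈ B, b ≠ 0 := by
        by_contra h
        push_neg at h
        exact hB0 (Finset.eq_singleton_iff_unique_mem.2 ⟨hB, fun x hx => by
          by_contra hxne; exact hxne (h x hx)⟩)
      have hAuniv : A = Finset.univ :=
        chowla_closed_univ hN A hA b (hunit b hbB hbne) (fun a ha => hex a ha b hbB)
      have hABuniv : A + B = Finset.univ := by
        apply Finset.eq_univ_of_forall
        intro x
        rw [Finset.mem_add]
        exact ⟨x, hAuniv ▸ Finset.mem_univ x, 0, hB, by ring⟩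
      rw [hABuniv]
      simp [ZMod.card]

theorem cauchy_davenport_variant (N : ℕ) (hN : 0 < N) (A B : Finset (ZMod N))
    (hA : A.Nonempty) (hB : (0 : ZMod N) ∈ B)
    (hunit : ∀ b ∈ B, b ≠ 0 → IsUnit b) :
    min N (A.card + B.card - 1) ≤ (A + B).card := by
  exact chowla_aux N hN B.card A B le_rfl hA hB hunit
end

section
/- Let n be a positive integer and let d_1, ..., d_n ∈ Z/n satisfy d_1 + ... + d_n = 0 in Z/n. Then there exist permutations c: {1,...,n} → {1,...,n} (values c_1,...,c_n a permutation of 1,...,n) and σ ∈ S_n such that i - c_i ≡ d_{σ(i)} (mod n) for every i. -/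
open Function Finset

private noncomputable def hallSeq {n : ℕ} [Nonempty (Fin n)] (a b : Fin n → ZMod n) (T : Finset (Fin n))
    (C z0 : ZMod n) : ℕ → ZMod n
  | 0 => z0
  | t + 1 => C - a (Function.invFunOn b (↑T) (hallSeq a b T C z0 t))

private lemma hall_aug {n : ℕ} (d : Fin n → ZMod n) (T : Finset (Fin n))
    (a b : Fin n → ZMod n)
    (hab : ∀ i ∈ T, a i - b i = d i)
    (ha : Set.InjOn a ↑T) (hb : Set.InjOn b ↑T)
    (hcard : T.card + 2 ≤ n) :
    ∃ (T' : Finset (Fin n)) (a' b' : Fin n → ZMod n),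
      (∀ i ∈ T', a' i - b' i = d i) ∧ Set.InjOn a' ↑T' ∧ Set.InjOn b' ↑T'
      ∧ T'.card = T.card + 1 := by
  classical
  haveI : NeZero n := ⟨by omega⟩
  haveI : Nonempty (Fin n) := ⟨⟨0, by omega⟩⟩
  obtain ⟨k, hk⟩ : ∃ k, k ∉ T := by
    by_contra h
    push_neg at h
    have hT : T = Finset.univ := Finset.eq_univ_iff_forall.2 h
    rw [hT, Finset.card_univ, Fintype.card_fin] at hcard
    omega
  have hAcard : (T.image a).card = T.card := Finset.card_image_of_injOn ha
  have hAc : 1 < (T.image a)ᶜ.card := by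
    rw [Finset.card_compl, hAcard]
    have hzc : Fintype.card (ZMod n) = n := ZMod.card n
    omega
  obtain ⟨x, hx, y, hy, hxy⟩ := Finset.one_lt_card.mp hAc
  rw [Finset.mem_compl] at hx hy
  set C : ZMod n := x + y - d k with hC
  set z : ℕ → ZMod n := hallSeq a b T C (x - d k) with hzdef
  have hz0 : z 0 = x - d k := by rw [hzdef]; rfl
  set idx : ℕ → Fin n := fun t => Function.invFunOn b (↑T) (z t) with hidxdef
  have hzs : ∀ t, z (t + 1) = C - a (idx t) := by
    intro t
    simp only [hzdef, hidxdef]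
    rfl
  have hmemidx : ∀ t, z t ∈ T.image b → idx t ∈ T ∧ b (idx t) = z t := by
    intro t ht
    obtain ⟨i, hi, hbi⟩ := Finset.mem_image.mp ht
    have hex : ∃ j ∈ (↑T : Set (Fin n)), b j = z t := ⟨i, hi, hbi⟩
    exact ⟨Function.invFunOn_mem hex, Function.invFunOn_eq hex⟩
  -- distinctness of the z sequence
  have hdist : ∀ t, (∀ r, r < t → z r ∈ T.image b) → ∀ s, s < t → z s ≠ z t := by
    intro t
    induction t using Nat.strong_induction_on with
    | _ t IH =>
      intro hr s hs heq
      obtain ⟨t', rfl⟩ : ∃ t', t = t' + 1 := ⟨t - 1, by omega⟩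
      have ht' : z t' ∈ T.image b := hr t' (by omega)
      obtain ⟨hidxT, hbidx⟩ := hmemidx t' ht'
      rcases s with _ | s'
      · have hay : a (idx t') = y := by
          have h1 : x - d k = C - a (idx t') := by rw [← hz0, heq, hzs]
          have h2 : a (idx t') = C - (x - d k) := by
            rw [h1]; ring
          rw [h2, hC]; ring
        exact hy (Finset.mem_image.mpr ⟨idx t', hidxT, hay⟩)
      · have hs' : z s' ∈ T.image b := hr s' (by omega)
        obtain ⟨hidxS, hbidxS⟩ := hmemidx s' hs'
        have haeq : a (idx s') = a (idx t') := by
          have h1 : C - a (idx s') = C - a (idx t') := by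
            rw [← hzs, ← hzs, heq]
          exact sub_right_injective h1
        have hidxeq : idx s' = idx t' := ha hidxS hidxT haeq
        have hzeq : z s' = z t' := by rw [← hbidxS, ← hbidx, hidxeq]
        exact IH t' (by omega) (fun r hrr => hr r (by omega)) s' (by omega) hzeq
  -- the sequence must exit the image of b
  have hexit : ∃ t, z t ∉ T.image b := by
    by_contra h
    push_neg at h
    obtain ⟨i, j, hne, heq⟩ := Fintype.exists_ne_map_eq_of_card_lt
      (fun i : Fin (n + 1) => z i) (by rw [ZMod.card, Fintype.card_fin]; omega)
    rcases Ne.lt_or_gt hne with hlt | hlt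
    · exact hdist j (fun r _ => h r) i hlt heq
    · exact hdist i (fun r _ => h r) j hlt heq.symm
  set T0 : ℕ := Nat.find hexit with hT0def
  have hT0 : z T0 ∉ T.image b := Nat.find_spec hexit
  have hlt : ∀ t, t < T0 → z t ∈ T.image b := by
    intro t ht
    by_contra hc
    have h2 : T0 ≤ t := hT0def ▸ Nat.find_le hc
    omega
  have hzinj : ∀ s t, s < t → t ≤ T0 → z s ≠ z t := by
    intro s t hst ht
    exact hdist t (fun r hrr => hlt r (by omega)) s hst
  have hpath : ∀ t, t < T0 → idx t ∈ T ∧ b (idx t) = z t :=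
    fun t ht => hmemidx t (hlt t ht)
  have hidxinj : ∀ s t, s < T0 → t < T0 → idx s = idx t → s = t := by
    intro s t hs ht hidx
    by_contra hne
    have hzne : z s = z t := by
      rw [← (hpath s hs).2, ← (hpath t ht).2, hidx]
    rcases Nat.lt_or_ge s t with hlt' | hge
    · exact hzinj s t hlt' (by omega) hzne
    · have : s ≠ t := hne
      have hts : t < s := by omega
      exact hzinj t s hts (by omega) hzne.symm
  have hidxk : ∀ t, t < T0 → idx t ≠ k := fun t ht h => hk (h ▸ (hpath t ht).1)
  -- new system
  set b' : Fin n → ZMod n := fun i =>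
    if i = k then z 0
    else if h : ∃ t, t < T0 ∧ i = idx t then z (h.choose + 1)
    else b i with hb'def
  set a' : Fin n → ZMod n := fun i => b' i + d i with ha'def
  have hb'k : b' k = z 0 := by simp [hb'def]
  have hb'path : ∀ t, t < T0 → b' (idx t) = z (t + 1) := by
    intro t ht
    have hex : ∃ s, s < T0 ∧ idx t = idx s := ⟨t, ht, rfl⟩
    have h1 : b' (idx t) = z (hex.choose + 1) := by
      simp only [hb'def, if_neg (hidxk t ht), dif_pos hex]
    have h2 : hex.choose = t :=
      hidxinj hex.choose t hex.choose_spec.1 ht hex.choose_spec.2.symm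
    rw [h1, h2]
  have hb'off : ∀ i, i ≠ k → (¬∃ t, t < T0 ∧ i = idx t) → b' i = b i := by
    intro i h1 h2
    simp only [hb'def, if_neg h1, dif_neg h2]
  -- b-values of off-path indices are not on the path
  have hoffz : ∀ i ∈ T, (¬∃ t, t < T0 ∧ i = idx t) → ∀ t, t ≤ T0 → b i ≠ z t := by
    intro i hi hoff t ht hbi
    rcases Nat.lt_or_ge t T0 with h | h
    · have hieq : i = idx t := hb hi (hpath t h).1 (hbi.trans (hpath t h).2.symm)
      exact hoff ⟨t, h, hieq⟩
    · have hteq : t = T0 := by omega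
      rw [hteq] at hbi
      exact hT0 (hbi ▸ Finset.mem_image.mpr ⟨i, hi, rfl⟩)
  -- a-values
  have ha'k : a' k = x := by
    simp only [ha'def, hb'k, hz0]; ring
  have ha'path : ∀ t, t < T0 → a' (idx t) = C - z t := by
    intro t ht
    have hd : d (idx t) = a (idx t) - b (idx t) := (hab _ (hpath t ht).1).symm
    simp only [ha'def, hb'path t ht, hzs t, hd, (hpath t ht).2]
    ring
  have ha'off : ∀ i, i ∈ T → i ≠ k → (¬∃ t, t < T0 ∧ i = idx t) → a' i = a i := by
    intro i hi h1 h2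
    simp only [ha'def, hb'off i h1 h2]
    rw [← hab i hi]
    ring
  have hCz0 : C - z 0 = y := by rw [hC, hz0]; ring
  have hCzs : ∀ t, C - z (t + 1) = a (idx t) := by
    intro t; rw [hzs]; ring
  refine ⟨insert k T, a', b', ?_, ?_, ?_, Finset.card_insert_of_notMem hk⟩
  · intro i _
    simp only [ha'def]; ring
  · -- InjOn a'
    intro i hi j hj heq
    simp only [Finset.coe_insert, Set.mem_insert_iff, Finset.mem_coe] at hi hj
    -- classify an element: k, on-path, or off-path
    have classify : ∀ i, i = k ∨ i ∈ T →
        i = k ∨ (∃ t, t < T0 ∧ i = idx t) ∨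
          (i ∈ T ∧ i ≠ k ∧ ¬∃ t, t < T0 ∧ i = idx t) := by
      intro i hi
      by_cases h1 : i = k
      · exact Or.inl h1
      · rcases hi with h | h
        · exact absurd h h1
        · by_cases h2 : ∃ t, t < T0 ∧ i = idx t
          · exact Or.inr (Or.inl h2)
          · exact Or.inr (Or.inr ⟨h, h1, h2⟩)
    have hxmem : ∀ i ∈ T, a' i ≠ x := by
      intro i hi hcon
      rcases classify i (Or.inr hi) with h | h | h
      · exact hk (h ▸ hi)
      · obtain ⟨t, ht, rfl⟩ := h
        rw [ha'path t ht] at hcon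
        rcases Nat.eq_zero_or_pos t with rfl | hpos
        · rw [hCz0] at hcon
          exact hxy (hcon ▸ rfl)
        · obtain ⟨t', rfl⟩ : ∃ t', t = t' + 1 := ⟨t - 1, by omega⟩
          rw [hCzs t'] at hcon
          exact hx (Finset.mem_image.mpr ⟨idx t', (hpath t' (by omega)).1, hcon⟩)
      · obtain ⟨hiT, h1, h2⟩ := h
        rw [ha'off i hiT h1 h2] at hcon
        exact hx (Finset.mem_image.mpr ⟨i, hiT, hcon⟩)
    rcases classify i hi with rfl | hi' | hi'
    · rcases classify j hj with rfl | hj' | hj'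
      · rfl
      · exfalso
        obtain ⟨t, ht, rfl⟩ := hj'
        exact hxmem (idx t) (hpath t ht).1 (heq ▸ ha'k)
      · exfalso
        exact hxmem j hj'.1 (heq ▸ ha'k)
    · rcases classify j hj with rfl | hj' | hj'
      · exfalso
        obtain ⟨t, ht, rfl⟩ := hi'
        exact hxmem (idx t) (hpath t ht).1 (heq.symm ▸ ha'k)
      · obtain ⟨t, ht, rfl⟩ := hi'
        obtain ⟨s, hs, rfl⟩ := hj'
        rw [ha'path t ht, ha'path s hs] at heq
        have hzeq : z t = z s := sub_right_injective heq
        have hts : t = s := by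
          by_contra hne
          rcases Nat.lt_or_ge t s with h | h
          · exact hzinj t s h (by omega) hzeq
          · exact hzinj s t (by omega) (by omega) hzeq.symm
        rw [hts]
      · exfalso
        obtain ⟨t, ht, rfl⟩ := hi'
        obtain ⟨hjT, hj1, hj2⟩ := hj'
        rw [ha'path t ht, ha'off j hjT hj1 hj2] at heq
        rcases Nat.eq_zero_or_pos t with rfl | hpos
        · rw [hCz0] at heq
          exact hy (Finset.mem_image.mpr ⟨j, hjT, heq.symm⟩)
        · obtain ⟨t', rfl⟩ : ∃ t', t = t' + 1 := ⟨t - 1, by omega⟩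
          rw [hCzs t'] at heq
          have hji : idx t' = j := ha (hpath t' (by omega)).1 hjT heq
          exact hj2 ⟨t', by omega, hji.symm⟩
    · rcases classify j hj with rfl | hj' | hj'
      · exfalso
        exact hxmem i hi'.1 (heq.symm ▸ ha'k)
      · exfalso
        obtain ⟨t, ht, rfl⟩ := hj'
        obtain ⟨hiT, hi1, hi2⟩ := hi'
        rw [ha'path t ht, ha'off i hiT hi1 hi2] at heq
        rcases Nat.eq_zero_or_pos t with rfl | hpos
        · rw [hCz0] at heq
          exact hy (Finset.mem_image.mpr ⟨i, hiT, heq⟩)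
        · obtain ⟨t', rfl⟩ : ∃ t', t = t' + 1 := ⟨t - 1, by omega⟩
          rw [hCzs t'] at heq
          have hij : i = idx t' := ha hiT (hpath t' (by omega)).1 heq
          exact hi2 ⟨t', by omega, hij⟩
      · obtain ⟨hiT, hi1, hi2⟩ := hi'
        obtain ⟨hjT, hj1, hj2⟩ := hj'
        rw [ha'off i hiT hi1 hi2, ha'off j hjT hj1 hj2] at heq
        exact ha hiT hjT heq
  · -- InjOn b'
    intro i hi j hj heq
    simp only [Finset.coe_insert, Set.mem_insert_iff, Finset.mem_coe] at hi hj
    have classify : ∀ i, i = k ∨ i ∈ T →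
        i = k ∨ (∃ t, t < T0 ∧ i = idx t) ∨
          (i ∈ T ∧ i ≠ k ∧ ¬∃ t, t < T0 ∧ i = idx t) := by
      intro i hi
      by_cases h1 : i = k
      · exact Or.inl h1
      · rcases hi with h | h
        · exact absurd h h1
        · by_cases h2 : ∃ t, t < T0 ∧ i = idx t
          · exact Or.inr (Or.inl h2)
          · exact Or.inr (Or.inr ⟨h, h1, h2⟩)
    -- b' values: k ↦ z 0; idx t ↦ z (t+1); off i ↦ b i (≠ any z t, t ≤ T0)
    have hzne : ∀ s t, s ≤ T0 → t ≤ T0 → z s = z t → s = t := by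
      intro s t hs ht h
      by_contra hne
      rcases Nat.lt_or_ge s t with hl | hl
      · exact hzinj s t hl ht h
      · exact hzinj t s (by omega) hs h.symm
    rcases classify i hi with rfl | hi' | hi'
    · rcases classify j hj with rfl | hj' | hj'
      · rfl
      · exfalso
        obtain ⟨t, ht, rfl⟩ := hj'
        rw [hb'k, hb'path t ht] at heq
        exact absurd (hzne 0 (t + 1) (by omega) (by omega) heq) (by omega)
      · exfalso
        obtain ⟨hjT, hj1, hj2⟩ := hj'
        rw [hb'k, hb'off j hj1 hj2] at heq
        exact hoffz j hjT hj2 0 (by omega) heq.symm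
    · rcases classify j hj with rfl | hj' | hj'
      · exfalso
        obtain ⟨t, ht, rfl⟩ := hi'
        rw [hb'k, hb'path t ht] at heq
        exact absurd (hzne (t + 1) 0 (by omega) (by omega) heq) (by omega)
      · obtain ⟨t, ht, rfl⟩ := hi'
        obtain ⟨s, hs, rfl⟩ := hj'
        rw [hb'path t ht, hb'path s hs] at heq
        have h2 := hzne (t + 1) (s + 1) (by omega) (by omega) heq
        have hts : t = s := by omega
        rw [hts]
      · exfalso
        obtain ⟨t, ht, rfl⟩ := hi'
        obtain ⟨hjT, hj1, hj2⟩ := hj'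
        rw [hb'path t ht, hb'off j hj1 hj2] at heq
        exact hoffz j hjT hj2 (t + 1) (by omega) heq.symm
    · rcases classify j hj with rfl | hj' | hj'
      · exfalso
        obtain ⟨hiT, hi1, hi2⟩ := hi'
        rw [hb'k, hb'off i hi1 hi2] at heq
        exact hoffz i hiT hi2 0 (by omega) heq
      · exfalso
        obtain ⟨t, ht, rfl⟩ := hj'
        obtain ⟨hiT, hi1, hi2⟩ := hi'
        rw [hb'path t ht, hb'off i hi1 hi2] at heq
        exact hoffz i hiT hi2 (t + 1) (by omega) heq
      · obtain ⟨hiT, hi1, hi2⟩ := hi'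
        obtain ⟨hjT, hj1, hj2⟩ := hj'
        rw [hb'off i hi1 hi2, hb'off j hj1 hj2] at heq
        exact hb hiT hjT heq

private lemma hall_exists_system {n : ℕ} (d : Fin n → ZMod n) :
    ∀ m : ℕ, m + 1 ≤ n → ∃ (T : Finset (Fin n)) (a b : Fin n → ZMod n),
      (∀ i ∈ T, a i - b i = d i) ∧ Set.InjOn a ↑T ∧ Set.InjOn b ↑T
      ∧ T.card = m := by
  intro m
  induction m with
  | zero =>
    intro _
    exact ⟨∅, 0, 0, by simp, by simp, by simp, by simp⟩
  | succ m ih =>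
    intro hm
    obtain ⟨T, a, b, hab, ha, hb, hcard⟩ := ih (by omega)
    obtain ⟨T', a', b', hab', ha', hb', hcard'⟩ :=
      hall_aug d T a b hab ha hb (by omega)
    exact ⟨T', a', b', hab', ha', hb', by omega⟩

theorem hall_cyclic (n : ℕ) (hn : 0 < n) (d : Fin n → ZMod n)
    (hd : ∑ i, d i = 0) :
    ∃ c σ : Equiv.Perm (Fin n), ∀ i,
      ((i.val : ZMod n) - ((c i).val : ZMod n)) = d (σ i) := by
  classical
  haveI : NeZero n := ⟨hn.ne'⟩
  -- a system of size n - 1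
  obtain ⟨T, a, b, hab, ha, hb, hcard⟩ := hall_exists_system d (n - 1) (by omega)
  -- the missing index k
  have hTc : Tᶜ.card = 1 := by
    rw [Finset.card_compl, hcard, Fintype.card_fin]
    omega
  obtain ⟨k, hkc⟩ := Finset.card_eq_one.mp hTc
  have hk : k ∉ T := by
    have : k ∈ Tᶜ := hkc ▸ Finset.mem_singleton_self k
    simpa using this
  have hmemT : ∀ i : Fin n, i ≠ k → i ∈ T := by
    intro i hik
    by_contra h
    have : i ∈ Tᶜ := Finset.mem_compl.mpr h
    rw [hkc, Finset.mem_singleton] at this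
    exact hik this
  -- the missing a-value x and b-value y
  have hAcard : ((T.image a)ᶜ).card = 1 := by
    rw [Finset.card_compl, Finset.card_image_of_injOn ha, hcard, ZMod.card]
    omega
  obtain ⟨x, hxc⟩ := Finset.card_eq_one.mp hAcard
  have hx : x ∉ T.image a := by
    have : x ∈ (T.image a)ᶜ := hxc ▸ Finset.mem_singleton_self x
    simpa using this
  have hmemA : ∀ v : ZMod n, v ≠ x → v ∈ T.image a := by
    intro v hv
    by_contra h
    have : v ∈ (T.image a)ᶜ := Finset.mem_compl.mpr h
    rw [hxc, Finset.mem_singleton] at this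
    exact hv this
  have hBcard : ((T.image b)ᶜ).card = 1 := by
    rw [Finset.card_compl, Finset.card_image_of_injOn hb, hcard, ZMod.card]
    omega
  obtain ⟨y, hyc⟩ := Finset.card_eq_one.mp hBcard
  have hy : y ∉ T.image b := by
    have : y ∈ (T.image b)ᶜ := hyc ▸ Finset.mem_singleton_self y
    simpa using this
  -- sum computation : d k = x - y
  have hTA : T.image a = {x}ᶜ := by
    rw [← compl_compl (T.image a), hxc]
  have hTB : T.image b = {y}ᶜ := by
    rw [← compl_compl (T.image b), hyc]
  have hsumA : ∑ i ∈ T, a i = (∑ v : ZMod n, v) - x := by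
    have h1 : ∑ v ∈ T.image a, v = ∑ i ∈ T, a i :=
      Finset.sum_image (fun i hi j hj hij => ha hi hj hij)
    have h2 : ∑ v ∈ {x}ᶜ, v + ∑ v ∈ ({x} : Finset (ZMod n)), v = ∑ v : ZMod n, v :=
      Finset.sum_compl_add_sum {x} _
    rw [Finset.sum_singleton] at h2
    rw [← h1, hTA]
    linear_combination h2
  have hsumB : ∑ i ∈ T, b i = (∑ v : ZMod n, v) - y := by
    have h1 : ∑ v ∈ T.image b, v = ∑ i ∈ T, b i :=
      Finset.sum_image (fun i hi j hj hij => hb hi hj hij)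
    have h2 : ∑ v ∈ {y}ᶜ, v + ∑ v ∈ ({y} : Finset (ZMod n)), v = ∑ v : ZMod n, v :=
      Finset.sum_compl_add_sum {y} _
    rw [Finset.sum_singleton] at h2
    rw [← h1, hTB]
    linear_combination h2
  have hsumT : ∑ i ∈ T, d i = y - x := by
    have : ∑ i ∈ T, d i = ∑ i ∈ T, (a i - b i) :=
      Finset.sum_congr rfl (fun i hi => (hab i hi).symm)
    rw [this, Finset.sum_sub_distrib, hsumA, hsumB]
    ring
  have hdk : d k = x - y := by
    have hsplit : ∑ i ∈ ({k} : Finset (Fin n))ᶜ, d i + ∑ i ∈ ({k} : Finset (Fin n)), d i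
        = ∑ i, d i := Finset.sum_compl_add_sum {k} d
    have hTk : T = ({k} : Finset (Fin n))ᶜ := by
      rw [← compl_compl T, hkc]
    rw [Finset.sum_singleton, hd, ← hTk, hsumT] at hsplit
    linear_combination hsplit
  -- complete the system
  set a' : Fin n → ZMod n := fun i => if i = k then x else a i with ha'def
  set b' : Fin n → ZMod n := fun i => if i = k then y else b i with hb'def
  have hab' : ∀ i, a' i - b' i = d i := by
    intro i
    by_cases hik : i = k
    · subst hik
      rw [ha'def, hb'def]
      simp [hdk]
    · simp only [ha'def, hb'def, if_neg hik]
      exact hab i (hmemT i hik)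
  have ha'inj : Function.Injective a' := by
    intro i j hij
    by_cases h1 : i = k <;> by_cases h2 : j = k
    · rw [h1, h2]
    · exfalso
      rw [ha'def] at hij
      simp only [if_pos h1, if_neg h2] at hij
      exact hx (Finset.mem_image.mpr ⟨j, hmemT j h2, hij.symm⟩)
    · exfalso
      rw [ha'def] at hij
      simp only [if_pos h2, if_neg h1] at hij
      exact hx (Finset.mem_image.mpr ⟨i, hmemT i h1, hij⟩)
    · rw [ha'def] at hij
      simp only [if_neg h1, if_neg h2] at hij
      exact ha (hmemT i h1) (hmemT j h2) hij
  have hb'inj : Function.Injective b' := by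
    intro i j hij
    by_cases h1 : i = k <;> by_cases h2 : j = k
    · rw [h1, h2]
    · exfalso
      rw [hb'def] at hij
      simp only [if_pos h1, if_neg h2] at hij
      exact hy (Finset.mem_image.mpr ⟨j, hmemT j h2, hij.symm⟩)
    · exfalso
      rw [hb'def] at hij
      simp only [if_pos h2, if_neg h1] at hij
      exact hy (Finset.mem_image.mpr ⟨i, hmemT i h1, hij⟩)
    · rw [hb'def] at hij
      simp only [if_neg h1, if_neg h2] at hij
      exact hb (hmemT i h1) (hmemT j h2) hij
  -- bijections
  have hcards : Fintype.card (Fin n) = Fintype.card (ZMod n) := by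
    rw [Fintype.card_fin, ZMod.card]
  have ha'bij : Function.Bijective a' :=
    (Fintype.bijective_iff_injective_and_card a').mpr ⟨ha'inj, hcards⟩
  have hb'bij : Function.Bijective b' :=
    (Fintype.bijective_iff_injective_and_card b').mpr ⟨hb'inj, hcards⟩
  -- the canonical bijection Fin n → ZMod n
  set e : Fin n → ZMod n := fun i => (i.val : ZMod n) with hedef
  have heinj : Function.Injective e := by
    intro i j hij
    apply Fin.ext
    rw [← ZMod.val_cast_of_lt i.isLt, ← ZMod.val_cast_of_lt j.isLt]
    simp only [hedef] at hij
    rw [hij]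
  have hebij : Function.Bijective e :=
    (Fintype.bijective_iff_injective_and_card e).mpr ⟨heinj, hcards⟩
  set E : Fin n ≃ ZMod n := Equiv.ofBijective e hebij with hEdef
  set A : Fin n ≃ ZMod n := Equiv.ofBijective a' ha'bij with hAdef
  set B : Fin n ≃ ZMod n := Equiv.ofBijective b' hb'bij with hBdef
  refine ⟨(E.trans A.symm).trans (B.trans E.symm), E.trans A.symm, fun i => ?_⟩
  have hσ : a' ((E.trans A.symm) i) = ((i.val : ℕ) : ZMod n) := by
    have h1 : A ((E.trans A.symm) i) = E i := by
      simp [Equiv.trans_apply]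
    exact h1
  have hc : (((((E.trans A.symm).trans (B.trans E.symm)) i).val : ℕ) : ZMod n)
      = b' ((E.trans A.symm) i) := by
    have h2 : e (E.symm (B ((E.trans A.symm) i))) = B ((E.trans A.symm) i) :=
      E.apply_symm_apply _
    exact h2
  rw [← hσ, hc]
  exact hab' _
end

section
/- Suppose p = 2n+1 is an odd prime and d_1, ..., d_n are nonzero elements of Z/p. Then there exists a partition of Z/p \ {0} into n pairs whose differences are d_1, ..., d_n (where the difference of a pair {a,b} is a - b or b - a). -/
open Finset MvPolynomial Matrix

namespace SeatingAux


abbrev Idx (n : ℕ) := Fin n × Fin 2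

variable {n : ℕ}

/-- flat index of a doubled variable slot -/
def m2 (ρ : Idx n) : ℕ := ρ.2.1 + 2 * ρ.1.1

lemma m2_lt (ρ : Idx n) : m2 ρ < 2 * n := by
  obtain ⟨⟨c, hc⟩, ⟨s, hs⟩⟩ := ρ
  simp only [m2]
  omega

lemma m2_inj : Function.Injective (m2 (n := n)) := by
  rintro ⟨⟨c, hc⟩, ⟨s, hs⟩⟩ ⟨⟨c', hc'⟩, ⟨s', hs'⟩⟩ h
  simp only [m2] at h
  simp only [Prod.ext_iff, Fin.ext_iff]
  omega

def eI : Idx n ≃ Fin (n * 2) := finProdFinEquiv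

lemma eI_val (ρ : Idx n) : ((eI ρ : Fin (n * 2)) : ℕ) = m2 ρ := rfl

def UP (n : ℕ) : Finset (Fin n × Fin n) := (univ ×ˢ univ).filter fun q => q.1 < q.2

lemma mem_UP {q : Fin n × Fin n} : q ∈ UP n ↔ q.1 < q.2 := by simp [UP]

lemma prod_pairs_split {γ : Type*} [CommMonoid γ] (F : Fin (n * 2) → Fin (n * 2) → γ) :
    (∏ a, ∏ b ∈ Ioi a, F a b) =
      (∏ c : Fin n, F (eI (c, 0)) (eI (c, 1))) *
        ∏ q ∈ UP n, ∏ st : Fin 2 × Fin 2, F (eI (q.1, st.1)) (eI (q.2, st.2)) := by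
  classical
  set S : Finset (Fin (n * 2) × Fin (n * 2)) :=
    (univ ×ˢ univ).filter (fun q => q.1 < q.2) with hS
  have h1 : (∏ a, ∏ b ∈ Ioi a, F a b) = ∏ q ∈ S, F q.1 q.2 := by
    rw [hS, Finset.prod_filter, Finset.prod_product]
    refine Finset.prod_congr rfl fun a _ => ?_
    have : Ioi a = univ.filter (fun b => a < b) := by ext b; simp
    rw [this, Finset.prod_filter]
  rw [h1, ← Finset.prod_filter_mul_prod_filter_not S (fun q => (q.1 : ℕ) / 2 = (q.2 : ℕ) / 2)]
  congr 1
  · have himg : S.filter (fun q => (q.1 : ℕ) / 2 = (q.2 : ℕ) / 2) =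
        Finset.image (fun c : Fin n => (eI (c, 0), eI (c, 1))) univ := by
      ext ⟨⟨av, ha⟩, ⟨bv, hb⟩⟩
      simp only [hS, Finset.mem_filter, Finset.mem_product, Finset.mem_univ, true_and,
        Finset.mem_image, Prod.ext_iff, Fin.ext_iff, Fin.lt_def, eI_val]
      constructor
      · rintro ⟨h1, h2⟩
        exact ⟨⟨av / 2, by omega⟩, by simp [m2]; omega, by simp [m2]; omega⟩
      · rintro ⟨⟨c, hc⟩, h1, h2⟩
        simp [m2] at h1 h2
        omega
    rw [himg, Finset.prod_image]
    rintro ⟨c, hc⟩ - ⟨c', hc'⟩ - h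
    simp only [Prod.ext_iff, Fin.ext_iff, eI_val, m2] at h
    simp only [Fin.ext_iff]
    omega
  · have himg : S.filter (fun q => ¬((q.1 : ℕ) / 2 = (q.2 : ℕ) / 2)) =
        Finset.image (fun z : (Fin n × Fin n) × (Fin 2 × Fin 2) =>
          (eI (z.1.1, z.2.1), eI (z.1.2, z.2.2))) ((UP n) ×ˢ univ) := by
      ext ⟨⟨av, ha⟩, ⟨bv, hb⟩⟩
      simp only [hS, Finset.mem_filter, Finset.mem_product, Finset.mem_univ, true_and,
        Finset.mem_image, Prod.ext_iff, Fin.ext_iff, Fin.lt_def, eI_val, mem_UP, and_true]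
      constructor
      · rintro ⟨h1, h2⟩
        refine ⟨⟨(⟨av/2, by omega⟩, ⟨bv/2, by omega⟩), (⟨av % 2, by omega⟩, ⟨bv % 2, by omega⟩)⟩,
          by simp [Fin.lt_def]; omega, by simp [m2]; omega, by simp [m2]; omega⟩
      · rintro ⟨⟨⟨⟨i, hi⟩, ⟨j, hj⟩⟩, ⟨⟨s, hs⟩, ⟨t, ht⟩⟩⟩, hij, h1, h2⟩
        simp only [Fin.lt_def] at hij
        simp [m2] at h1 h2
        omega
    rw [himg, Finset.prod_image, Finset.prod_product]
    rintro ⟨⟨⟨i, hi⟩, ⟨j, hj⟩⟩, ⟨⟨s, hs⟩, ⟨t, ht⟩⟩⟩ hz ⟨⟨⟨i', hi'⟩, ⟨j', hj'⟩⟩, ⟨⟨s', hs'⟩, ⟨t', ht'⟩⟩⟩ hz' h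
    simp only [Prod.ext_iff, Fin.ext_iff, eI_val, m2] at h
    simp only [Prod.ext_iff, Fin.ext_iff]
    omega


section Ring
variable {R : Type*} [CommRing R]

/-- the confluent-Vandermonde-like matrix with divided difference rows -/
def NW (w : Idx n → R) : Matrix (Idx n) (Idx n) R := Matrix.of fun a b =>
  if b.2 = 0 then w (b.1, 0) ^ m2 a
  else ∑ i ∈ range (m2 a), w (b.1, 1) ^ i * w (b.1, 0) ^ (m2 a - 1 - i)

def EW (w : Idx n → R) : Matrix (Idx n) (Idx n) R :=
  (Matrix.blockDiagonal fun c : Fin n =>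
    (!![1, 1; 0, w (c, 1) - w (c, 0)] : Matrix (Fin 2) (Fin 2) R)).submatrix
    (Equiv.prodComm (Fin n) (Fin 2)) (Equiv.prodComm (Fin n) (Fin 2))

def VW (w : Idx n → R) : Matrix (Idx n) (Idx n) R := Matrix.of fun a b => w b ^ m2 a

lemma VW_eq_mul (w : Idx n → R) : VW w = NW w * EW w := by
  ext a ⟨c, s⟩
  rw [Matrix.mul_apply, Fintype.sum_prod_type]
  have hE : ∀ (c' : Fin n) (s' : Fin 2), EW w (c', s') (c, s) =
      if c' = c then (!![1, 1; 0, w (c, 1) - w (c, 0)] : Matrix (Fin 2) (Fin 2) R) s' s else 0 := by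
    intro c' s'
    by_cases hcc : c' = c
    · subst hcc; simp [EW, Matrix.blockDiagonal_apply]
    · simp [EW, Matrix.blockDiagonal_apply, hcc]
  have hz : ∀ c' ∈ (univ : Finset (Fin n)), c' ≠ c →
      (∑ s' : Fin 2, NW w a (c', s') * EW w (c', s') (c, s)) = 0 := by
    intro c' _ hc'
    simp [hE, hc']
  rw [Finset.sum_eq_single c (fun c' h h' => hz c' h h') (by simp)]
  rw [Fin.sum_univ_two]
  simp only [hE, if_pos rfl]
  fin_cases s
  · simp [NW, VW]
  · simp only [NW, VW, Matrix.of_apply, Matrix.cons_val_one, Matrix.cons_val_zero,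
      Matrix.head_cons, Matrix.cons_val', Matrix.empty_val', Matrix.cons_val_fin_one]
    norm_num
    linear_combination -geom_sum₂_mul (w (c, 1)) (w (c, 0)) (m2 a)

lemma det_EW (w : Idx n → R) : det (EW w) = ∏ c : Fin n, (w (c, 1) - w (c, 0)) := by
  unfold EW
  rw [Matrix.det_submatrix_equiv_self, Matrix.det_blockDiagonal]
  refine Finset.prod_congr rfl fun c _ => ?_
  rw [Matrix.det_fin_two_of]
  ring

lemma det_VW (w : Idx n → R) :
    det (VW w) = ∏ a, ∏ b ∈ Ioi a, ((w ∘ eI.symm) b - (w ∘ eI.symm) a) := by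
  have h : VW w = ((Matrix.vandermonde (w ∘ (eI (n := n)).symm)).submatrix eI eI)ᵀ := by
    ext a b
    simp [VW, Matrix.vandermonde, eI_val, Matrix.transpose_apply]
  rw [h, Matrix.det_transpose, Matrix.det_submatrix_equiv_self, Matrix.det_vandermonde]

end Ring

lemma det_NW_poly :
    det (NW (X : Idx n → MvPolynomial (Idx n) ℤ)) =
      ∏ q ∈ UP n, ∏ st : Fin 2 × Fin 2, (X (q.2, st.2) - X (q.1, st.1)) := by
  have hΔ : (∏ c : Fin n, (X (c, 1) - X (c, 0) : MvPolynomial (Idx n) ℤ)) ≠ 0 := by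
    rw [Finset.prod_ne_zero_iff]
    intro c _
    refine sub_ne_zero.2 (MvPolynomial.X_injective.ne ?_)
    simp [Prod.ext_iff]
  have hdet := congrArg det (VW_eq_mul (X : Idx n → MvPolynomial (Idx n) ℤ))
  rw [Matrix.det_mul, det_EW, det_VW,
    prod_pairs_split (F := fun a b => (X ∘ (eI (n := n)).symm) b - (X ∘ (eI (n := n)).symm) a)]
    at hdet
  simp only [Function.comp_apply, Equiv.symm_apply_apply] at hdet
  apply mul_left_cancel₀ hΔ
  rw [hdet]
  ring

lemma det_NW {R : Type*} [CommRing R] (w : Idx n → R) :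
    det (NW w) = ∏ q ∈ UP n, ∏ st : Fin 2 × Fin 2, (w (q.2, st.2) - w (q.1, st.1)) := by
  have h := congrArg (MvPolynomial.aeval w : MvPolynomial (Idx n) ℤ →ₐ[ℤ] R) det_NW_poly
  rw [map_prod] at h
  simp only [map_prod, map_sub, MvPolynomial.aeval_X] at h
  rw [← h]
  have hmap := RingHom.map_det
    ((MvPolynomial.aeval w : MvPolynomial (Idx n) ℤ →ₐ[ℤ] R) : MvPolynomial (Idx n) ℤ →+* R)
    (NW (X : Idx n → MvPolynomial (Idx n) ℤ))
  rw [RingHom.mapMatrix_apply] at hmap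
  simp only [AlgHom.toRingHom_eq_coe, RingHom.coe_coe] at hmap
  rw [hmap]
  congr 1
  ext a b
  simp only [NW, Matrix.map_apply, Matrix.of_apply]
  split
  · simp
  · simp [map_sum]


/-! ### permutation gear -/

def sg0 (n : ℕ) : Equiv.Perm (Idx n) :=
  Equiv.prodCongrLeft (fun s : Fin 2 => if s = 1 then Fin.revPerm else 1)
def Pp (π : Equiv.Perm (Fin n)) : Equiv.Perm (Idx n) :=
  Equiv.prodCongrLeft (fun _ : Fin 2 => π)
def Te (ε : Fin n → Bool) : Equiv.Perm (Idx n) :=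
  Equiv.prodCongrRight (fun c => if ε c then Fin.revPerm else (1 : Equiv.Perm (Fin 2)))
def Phi (π : Equiv.Perm (Fin n)) (ε : Fin n → Bool) : Equiv.Perm (Idx n) :=
  sg0 n * Pp π * Te ε

lemma Phi_apply0 (π : Equiv.Perm (Fin n)) (ε : Fin n → Bool) (c : Fin n) :
    Phi π ε (c, 0) = if ε c then (Fin.rev (π c), 1) else (π c, 0) := by
  cases hc : ε c <;>
    simp [Phi, sg0, Pp, Te, Equiv.Perm.mul_apply, Equiv.prodCongrRight_apply,
      Equiv.prodCongrLeft_apply, hc, Fin.rev]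

lemma Phi_apply1 (π : Equiv.Perm (Fin n)) (ε : Fin n → Bool) (c : Fin n) :
    Phi π ε (c, 1) = if ε c then (π c, 0) else (Fin.rev (π c), 1) := by
  cases hc : ε c <;>
    simp [Phi, sg0, Pp, Te, Equiv.Perm.mul_apply, Equiv.prodCongrRight_apply,
      Equiv.prodCongrLeft_apply, hc, Fin.rev]

lemma sign_Phi (π : Equiv.Perm (Fin n)) (ε : Fin n → Bool) :
    Equiv.Perm.sign (Phi π ε) =
      Equiv.Perm.sign (sg0 n) * ∏ c : Fin n, (if ε c then (-1 : ℤˣ) else 1) := by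
  rw [Phi, _root_.map_mul, _root_.map_mul]
  have h1 : Equiv.Perm.sign (Pp π) = 1 := by
    rw [Pp, Equiv.Perm.sign_prodCongrLeft]
    simp [Finset.prod_const, ← sq, Int.units_sq]
  have h2 : Equiv.Perm.sign (Te ε) = ∏ c : Fin n, (if ε c then (-1 : ℤˣ) else 1) := by
    rw [Te, Equiv.Perm.sign_prodCongrRight]
    refine Finset.prod_congr rfl fun c _ => ?_
    have hrev : Equiv.Perm.sign (Fin.revPerm : Equiv.Perm (Fin 2)) = -1 := by decide
    cases hc : ε c <;> simp [hc, hrev]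
  rw [h1, h2, mul_one]

lemma Phi_inj : Function.Injective fun z : Equiv.Perm (Fin n) × (Fin n → Bool) => Phi z.1 z.2 := by
  rintro ⟨π, ε⟩ ⟨π', ε'⟩ h
  simp only at h
  have hkey : ∀ c, ε c = ε' c ∧ π c = π' c := by
    intro c
    have h0 : Phi π ε (c, 0) = Phi π' ε' (c, 0) := by rw [h]
    rw [Phi_apply0, Phi_apply0] at h0
    cases hc : ε c <;> cases hc' : ε' c <;> rw [hc, hc'] at h0 <;>
      simp only [Bool.false_eq_true, if_false, if_true, Prod.ext_iff] at h0
    · exact ⟨rfl, h0.1⟩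
    · exact absurd h0.2 (by decide)
    · exact absurd h0.2 (by decide)
    · exact ⟨rfl, Fin.rev_injective h0.1⟩
  have hε : ε = ε' := funext fun c => (hkey c).1
  have hπ : π = π' := Equiv.ext fun c => (hkey c).2
  rw [hε, hπ]

lemma fin2_cases (s : Fin 2) : s = 0 ∨ s = 1 := by
  rcases s with ⟨v, hv⟩
  interval_cases v
  · exact Or.inl rfl
  · exact Or.inr rfl

lemma Phi_surj (σ : Equiv.Perm (Idx n))
    (h : ∀ c : Fin n, m2 (σ (c, 0)) + m2 (σ (c, 1)) = 2 * n - 1) :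
    ∃ z : Equiv.Perm (Fin n) × (Fin n → Bool), Phi z.1 z.2 = σ := by
  have hJ : ∀ c : Fin n, σ (c, 1) = ((σ (c, 0)).1.rev, (σ (c, 0)).2.rev) := by
    intro c
    apply m2_inj
    have h1 := h c
    have l1 := m2_lt (σ (c, 0))
    have l2 := m2_lt (σ (c, 1))
    have hv : m2 (((σ (c, 0)).1.rev, (σ (c, 0)).2.rev) : Idx n) = 2 * n - 1 - m2 (σ (c, 0)) := by
      simp only [m2, Fin.val_rev]
      have i1 := (σ (c, 0)).1.isLt
      have i2 := (σ (c, 0)).2.isLt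
      omega
    omega
  classical
  set ε : Fin n → Bool := fun c => decide ((σ (c, 0)).2 = 1) with hε
  set π0 : Fin n → Fin n := fun c => if (σ (c, 0)).2 = 1 then (σ (c, 0)).1.rev else (σ (c, 0)).1
    with hπ0
  have hπinj : Function.Injective π0 := by
    intro i j hij
    simp only [hπ0] at hij
    by_cases hi : (σ (i, 0)).2 = 1 <;> by_cases hj : (σ (j, 0)).2 = 1
    · rw [if_pos hi, if_pos hj] at hij
      have heq : σ (i, 0) = σ (j, 0) :=
        Prod.ext (Fin.rev_injective hij) (by rw [hi, hj])
      exact (Prod.ext_iff.1 (σ.injective heq)).1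
    · rw [if_pos hi, if_neg hj] at hij
      exfalso
      have h2 : (σ (j, 0)).2 = 0 := (fin2_cases _).resolve_right hj
      have h3 : σ (j, 1) = ((σ (j, 0)).1.rev, 1) := by rw [hJ j, h2]; rfl
      have h4 : σ (j, 1) = σ (i, 0) := by
        rw [h3, ← hij, Fin.rev_rev]
        exact Prod.ext rfl hi.symm
      have h5 := σ.injective h4
      simp [Prod.ext_iff] at h5
    · rw [if_neg hi, if_pos hj] at hij
      exfalso
      have h2 : (σ (i, 0)).2 = 0 := (fin2_cases _).resolve_right hi
      have h3 : σ (i, 1) = ((σ (i, 0)).1.rev, 1) := by rw [hJ i, h2]; rfl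
      have h4 : σ (i, 1) = σ (j, 0) := by
        rw [h3, hij, Fin.rev_rev]
        exact Prod.ext rfl hj.symm
      have h5 := σ.injective h4
      simp [Prod.ext_iff] at h5
    · rw [if_neg hi, if_neg hj] at hij
      have h2 : (σ (i, 0)).2 = 0 := (fin2_cases _).resolve_right hi
      have h3 : (σ (j, 0)).2 = 0 := (fin2_cases _).resolve_right hj
      have heq : σ (i, 0) = σ (j, 0) := Prod.ext hij (by rw [h2, h3])
      exact (Prod.ext_iff.1 (σ.injective heq)).1
  let π : Equiv.Perm (Fin n) := Equiv.ofBijective π0 (Finite.injective_iff_bijective.mp hπinj)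
  have hπc : ∀ c, π c = π0 c := fun c => rfl
  have key0 : ∀ c : Fin n, Phi π ε (c, 0) = σ (c, 0) := by
    intro c
    rw [Phi_apply0]
    by_cases h2 : (σ (c, 0)).2 = 1
    · rw [if_pos (by simp [hε, h2]), hπc, hπ0]
      simp only [if_pos h2, Fin.rev_rev]
      exact Prod.ext rfl h2.symm
    · have h3 : (σ (c, 0)).2 = 0 := (fin2_cases _).resolve_right h2
      rw [if_neg (by simp [hε, h2]), hπc, hπ0]
      simp only [if_neg h2]
      exact Prod.ext rfl h3.symm
  refine ⟨⟨π, ε⟩, ?_⟩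
  apply Equiv.ext
  rintro ⟨c, s⟩
  rcases fin2_cases s with rfl | rfl
  · exact key0 c
  · rw [Phi_apply1, hJ c, ← key0 c, Phi_apply0]
    by_cases h2 : (σ (c, 0)).2 = 1
    · rw [if_pos (by simp [hε, h2]), if_pos (by simp [hε, h2])]
      exact Prod.ext (Fin.rev_rev _).symm rfl
    · rw [if_neg (by simp [hε, h2]), if_neg (by simp [hε, h2])]
      exact Prod.ext rfl rfl

/-! ### sums over ZMod p -/

section Field
variable {p : ℕ} [Fact p.Prime]

lemma powsum {n : ℕ} (hpn : p = 2 * n + 1) (k : ℕ) :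
    (∑ t : ZMod p, t ^ k) = if k ≠ 0 ∧ (2 * n) ∣ k then -1 else 0 := by
  have hp : p.Prime := Fact.out
  haveI : NeZero p := ⟨hp.pos.ne'⟩
  classical
  rcases Nat.eq_zero_or_pos k with rfl | hk
  · simp only [pow_zero, ne_eq, not_true_eq_false, false_and, if_false]
    rw [Finset.sum_const, Finset.card_univ, ZMod.card]
    simp
  · have h0 : (∑ t : ZMod p, t ^ k) = ∑ u : (ZMod p)ˣ, ((u : ZMod p)) ^ k := by
      rw [← Finset.add_sum_erase (univ : Finset (ZMod p)) (fun t => t ^ k) (Finset.mem_univ 0),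
        zero_pow hk.ne', zero_add]
      refine (Finset.sum_bij (fun (u : (ZMod p)ˣ) _ => (u : ZMod p)) ?_ ?_ ?_ ?_).symm
      · intro u _
        simp [Units.ne_zero]
      · intro u _ v _ h
        exact Units.ext h
      · intro t ht
        simp only [Finset.mem_erase, Finset.mem_univ, and_true] at ht
        exact ⟨Units.mk0 t ht, Finset.mem_univ _, rfl⟩
      · intro u _
        rfl
    rw [h0]
    have hq : Fintype.card (ZMod p) = p := ZMod.card p
    have := FiniteField.sum_pow_units (ZMod p) k
    rw [this, hq]
    have hiff : (p - 1 ∣ k) ↔ (k ≠ 0 ∧ 2 * n ∣ k) := by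
      constructor
      · intro hd
        exact ⟨hk.ne', by rwa [show p - 1 = 2 * n by omega] at hd⟩
      · rintro ⟨-, hd⟩
        rwa [show p - 1 = 2 * n by omega]
    simp only [hiff]

lemma inner_sum {n : ℕ} (hpn : p = 2 * n + 1) (m₀ m₁ : ℕ)
    (h0 : m₀ < 2 * n) (h1 : m₁ < 2 * n) (hne : m₀ ≠ m₁) :
    (∑ t : ZMod p, t ^ 2 * (t ^ m₀ * ∑ i ∈ range m₁, t ^ i * t ^ (m₁ - 1 - i))) =
      if m₀ + m₁ = 2 * n - 1 then -(m₁ : ZMod p) else 0 := by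
  have hn : 1 ≤ n := by omega
  rcases Nat.eq_zero_or_pos m₁ with rfl | hm1
  · simp only [range_zero, Finset.sum_empty, mul_zero, Finset.sum_const_zero]
    rw [if_congr (show (m₀ + 0 = 2 * n - 1) ↔ (m₀ = 2*n-1) by omega) rfl rfl]
    split <;> simp
  · have hsummand : ∀ t : ZMod p,
        t ^ 2 * (t ^ m₀ * ∑ i ∈ range m₁, t ^ i * t ^ (m₁ - 1 - i)) =
          (m₁ : ZMod p) * t ^ (m₀ + m₁ + 1) := by
      intro t
      rw [geom_sum₂_self]
      have he : m₀ + m₁ + 1 = 2 + (m₀ + (m₁ - 1)) := by omega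
      rw [he, pow_add, pow_add]
      ring
    simp_rw [hsummand]
    rw [← Finset.mul_sum, powsum hpn]
    have hcond : ((m₀ + m₁ + 1 ≠ 0) ∧ 2 * n ∣ (m₀ + m₁ + 1)) ↔ m₀ + m₁ = 2 * n - 1 := by
      constructor
      · rintro ⟨-, c, hc⟩
        rcases c with _ | _ | c
        · omega
        · omega
        · exfalso
          have h4 : 2 * n * (c + 1 + 1) = 2 * n * c + 4 * n := by ring
          have h5 : 0 ≤ 2 * n * c := Nat.zero_le _
          omega
      · intro hh
        exact ⟨by omega, ⟨1, by omega⟩⟩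
    by_cases hc : m₀ + m₁ = 2 * n - 1
    · rw [if_pos (hcond.2 hc), if_pos hc]
      ring
    · rw [if_neg (fun hcontra => hc (hcond.1 hcontra)), if_neg hc, mul_zero]

/-- The central sum computation. -/
lemma T_eq {n : ℕ} (hpn : p = 2 * n + 1) :
    (∑ x : Fin n → ZMod p, (∏ c, x c ^ 2) * det (NW (fun ρ : Idx n => x ρ.1))) =
      ((Equiv.Perm.sign (sg0 n) : ℤ) : ZMod p) * ((Nat.factorial n) : ZMod p) *
        ∏ c : Fin n, ((4 * (c : ℕ) + 2 : ℕ) : ZMod p) := by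
  classical
  have hstep1 : ∀ x : Fin n → ZMod p,
      (∏ c, x c ^ 2) * det (NW (fun ρ : Idx n => x ρ.1)) =
        ∑ σ : Equiv.Perm (Idx n), ((Equiv.Perm.sign σ : ℤ) : ZMod p) *
          ∏ c : Fin n, (x c ^ 2 * (x c ^ (m2 (σ (c, 0))) *
            ∑ i ∈ range (m2 (σ (c, 1))), x c ^ i * x c ^ (m2 (σ (c, 1)) - 1 - i))) := by
    intro x
    rw [Matrix.det_apply', Finset.mul_sum]
    refine Finset.sum_congr rfl fun σ _ => ?_
    rw [mul_left_comm]
    congr 1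
    rw [Fintype.prod_prod_type, ← Finset.prod_mul_distrib]
    refine Finset.prod_congr rfl fun c _ => ?_
    rw [Fin.prod_univ_two]
    have e0 : NW (fun ρ : Idx n => x ρ.1) (σ (c, 0)) (c, 0) = x c ^ (m2 (σ (c, 0))) := by
      simp [NW]
    have e1 : NW (fun ρ : Idx n => x ρ.1) (σ (c, 1)) (c, 1) =
        ∑ i ∈ range (m2 (σ (c, 1))), x c ^ i * x c ^ (m2 (σ (c, 1)) - 1 - i) := by
      simp [NW]
    rw [e0, e1]
  simp_rw [hstep1]
  rw [Finset.sum_comm]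
  have hstep2 : ∀ σ : Equiv.Perm (Idx n),
      (∑ x : Fin n → ZMod p, ((Equiv.Perm.sign σ : ℤ) : ZMod p) *
        ∏ c : Fin n, (x c ^ 2 * (x c ^ (m2 (σ (c, 0))) *
          ∑ i ∈ range (m2 (σ (c, 1))), x c ^ i * x c ^ (m2 (σ (c, 1)) - 1 - i)))) =
      ((Equiv.Perm.sign σ : ℤ) : ZMod p) *
        ∏ c : Fin n, (if m2 (σ (c, 0)) + m2 (σ (c, 1)) = 2 * n - 1
          then -((m2 (σ (c, 1)) : ZMod p)) else 0) := by
    intro σ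
    rw [← Finset.mul_sum]
    congr 1
    rw [← Fintype.piFinset_univ, Finset.sum_prod_piFinset (univ : Finset (ZMod p))
      (fun c t => t ^ 2 * (t ^ (m2 (σ (c, 0))) *
        ∑ i ∈ range (m2 (σ (c, 1))), t ^ i * t ^ (m2 (σ (c, 1)) - 1 - i)))]
    refine Finset.prod_congr rfl fun c _ => ?_
    exact inner_sum hpn _ _ (m2_lt _) (m2_lt _)
      (fun hh => (by simp : ((c, 0) : Idx n) ≠ (c, 1)) (σ.injective (m2_inj hh)))
  simp_rw [hstep2]
  -- now restrict the sum to the image of Phi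
  set tm : Equiv.Perm (Idx n) → ZMod p := fun σ =>
    ((Equiv.Perm.sign σ : ℤ) : ZMod p) *
      ∏ c : Fin n, (if m2 (σ (c, 0)) + m2 (σ (c, 1)) = 2 * n - 1
        then -((m2 (σ (c, 1)) : ZMod p)) else 0) with htm
  show (∑ σ : Equiv.Perm (Idx n), tm σ) = _
  have himg : ∀ σ ∈ (univ : Finset (Equiv.Perm (Idx n))),
      σ ∉ Finset.image (fun z : Equiv.Perm (Fin n) × (Fin n → Bool) => Phi z.1 z.2) univ →
      tm σ = 0 := by
    intro σ _ hσ
    have : ¬ (∀ c : Fin n, m2 (σ (c, 0)) + m2 (σ (c, 1)) = 2 * n - 1) := by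
      intro hall
      obtain ⟨z, hz⟩ := Phi_surj σ hall
      exact hσ (Finset.mem_image.2 ⟨z, Finset.mem_univ _, hz⟩)
    push_neg at this
    obtain ⟨c, hc⟩ := this
    have hz : (∏ c' : Fin n, (if m2 (σ (c', 0)) + m2 (σ (c', 1)) = 2 * n - 1
        then -((m2 (σ (c', 1)) : ZMod p)) else 0)) = 0 :=
      Finset.prod_eq_zero (Finset.mem_univ c) (if_neg hc)
    rw [htm]
    simp only
    rw [hz, mul_zero]
  rw [← Finset.sum_subset (Finset.subset_univ _) himg,
    Finset.sum_image (fun z _ z' _ h => Phi_inj h)]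
  -- evaluate on the image
  have hval : ∀ (π : Equiv.Perm (Fin n)) (ε : Fin n → Bool),
      tm (Phi π ε) = ((Equiv.Perm.sign (sg0 n) : ℤ) : ZMod p) *
        ∏ c : Fin n, ((if ε c then (-1 : ZMod p) else 1) *
          -(((if ε c then 2 * ((π c : ℕ)) else 2 * n - 1 - 2 * ((π c : ℕ))) : ℕ) : ZMod p)) := by
    intro π ε
    rw [htm]
    simp only
    have hsgn : ((Equiv.Perm.sign (Phi π ε) : ℤ) : ZMod p) =
        ((Equiv.Perm.sign (sg0 n) : ℤ) : ZMod p) *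
          ∏ c : Fin n, (if ε c then (-1 : ZMod p) else 1) := by
      rw [sign_Phi]
      push_cast [Units.val_mul]
      congr 1
      refine Finset.prod_congr rfl fun c _ => ?_
      cases ε c <;> simp
    have hm : ∀ c : Fin n, m2 (Phi π ε (c, 0)) + m2 (Phi π ε (c, 1)) = 2 * n - 1 := by
      intro c
      rw [Phi_apply0, Phi_apply1]
      have hlt := (π c).isLt
      cases hc : ε c <;> simp only [if_true, if_false, Bool.false_eq_true] <;>
        simp [m2, Fin.val_rev] <;> omega
    have hm1 : ∀ c : Fin n, m2 (Phi π ε (c, 1)) =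
        if ε c then 2 * ((π c : ℕ)) else 2 * n - 1 - 2 * ((π c : ℕ)) := by
      intro c
      rw [Phi_apply1]
      have hlt := (π c).isLt
      cases hc : ε c <;> simp [m2, Fin.val_rev] <;> omega
    rw [hsgn, mul_assoc, ← Finset.prod_mul_distrib]
    congr 1
    refine Finset.prod_congr rfl fun c _ => ?_
    rw [if_pos (hm c), hm1 c]
  have hε : ∀ π : Equiv.Perm (Fin n),
      (∑ ε : Fin n → Bool, ∏ c : Fin n, ((if ε c then (-1 : ZMod p) else 1) *
          -(((if ε c then 2 * ((π c : ℕ)) else 2 * n - 1 - 2 * ((π c : ℕ))) : ℕ) : ZMod p))) =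
        ∏ c : Fin n, ((4 * ((π c : ℕ)) + 2 : ℕ) : ZMod p) := by
    intro π
    rw [← Fintype.piFinset_univ, Finset.sum_prod_piFinset (univ : Finset Bool)
      (fun c b => (if b then (-1 : ZMod p) else 1) *
        -(((if b then 2 * ((π c : ℕ)) else 2 * n - 1 - 2 * ((π c : ℕ))) : ℕ) : ZMod p))]
    refine Finset.prod_congr rfl fun c _ => ?_
    rw [Fintype.sum_bool]
    simp only [if_true, if_false, Bool.false_eq_true, one_mul, neg_neg]
    have hle : (π c : ℕ) + 1 ≤ n := (π c).isLt
    have hc1 : ((2 * n - 1 - 2 * ((π c : ℕ)) : ℕ) : ZMod p) =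
        ((2 * n - 1 : ℕ) : ZMod p) - ((2 * ((π c : ℕ)) : ℕ) : ZMod p) := by
      rw [← Nat.cast_sub (by omega)]
    have hc2 : ((2 * n - 1 : ℕ) : ZMod p) = -2 := by
      have hple : 2 ≤ p := by omega
      have he : (2 * n - 1 : ℕ) = p - 2 := by omega
      rw [he, Nat.cast_sub hple, ZMod.natCast_self]
      push_cast
      ring
    rw [hc1, hc2]
    push_cast
    ring
  have hconst : ∀ π : Equiv.Perm (Fin n),
      (∏ c : Fin n, ((4 * ((π c : ℕ)) + 2 : ℕ) : ZMod p)) =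
        ∏ c : Fin n, ((4 * (c : ℕ) + 2 : ℕ) : ZMod p) :=
    fun π => Equiv.prod_comp π (fun c : Fin n => ((4 * (c : ℕ) + 2 : ℕ) : ZMod p))
  rw [← Finset.univ_product_univ, Finset.sum_product]
  have hπsum : ∀ π : Equiv.Perm (Fin n),
      (∑ ε : Fin n → Bool, tm (Phi π ε)) =
        ((Equiv.Perm.sign (sg0 n) : ℤ) : ZMod p) *
          ∏ c : Fin n, ((4 * (c : ℕ) + 2 : ℕ) : ZMod p) := by
    intro π
    rw [Finset.sum_congr rfl (fun ε _ => hval π ε), ← Finset.mul_sum, hε π, hconst π]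
  rw [Finset.sum_congr rfl (fun π _ => hπsum π), Finset.sum_const, Finset.card_univ,
    Fintype.card_perm, Fintype.card_fin, nsmul_eq_mul]
  ring

end Field


/-! ### the degree bound -/

lemma prod_sub_prod {K : Type*} [CommRing K] [Nontrivial K] {α σ' : Type*} (s : Finset α)
    (L : α → MvPolynomial σ' K) (c : α → K) (hL : ∀ a ∈ s, (L a).totalDegree ≤ 1) :
    (∏ a ∈ s, (L a + C (c a))) - ∏ a ∈ s, L a = 0 ∨
      ((∏ a ∈ s, (L a + C (c a))) - ∏ a ∈ s, L a).totalDegree < s.card := by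
  classical
  induction s using Finset.cons_induction with
  | empty => left; simp
  | cons a s ha ih =>
    have hL' : ∀ b ∈ s, (L b).totalDegree ≤ 1 := fun b hb => hL b (Finset.mem_cons_of_mem hb)
    have hLa : (L a).totalDegree ≤ 1 := hL a (Finset.mem_cons_self a s)
    right
    rw [Finset.prod_cons, Finset.prod_cons]
    have key : (L a + C (c a)) * ∏ b ∈ s, (L b + C (c b)) - L a * ∏ b ∈ s, L b
        = L a * ((∏ b ∈ s, (L b + C (c b))) - ∏ b ∈ s, L b)
          + C (c a) * ∏ b ∈ s, (L b + C (c b)) := by ring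
    rw [key]
    have hdF : (∏ b ∈ s, (L b + C (c b))).totalDegree ≤ s.card := by
      refine le_trans (totalDegree_finset_prod s _) ?_
      have hb1 : ∀ b ∈ s, (L b + C (c b)).totalDegree ≤ 1 := fun b hb =>
        le_trans (totalDegree_add _ _) (max_le (hL' b hb) (by simp [totalDegree_C]))
      calc ∑ b ∈ s, (L b + C (c b)).totalDegree
          ≤ ∑ _b ∈ s, 1 := Finset.sum_le_sum (f := fun b => (L b + C (c b)).totalDegree) (g := fun _ => 1) hb1
        _ = s.card := by simp
    have h1 : (C (c a) * ∏ b ∈ s, (L b + C (c b))).totalDegree < (Finset.cons a s ha).card := by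
      refine lt_of_le_of_lt (totalDegree_mul _ _) ?_
      rw [Finset.card_cons]
      have hC : (C (c a) : MvPolynomial σ' K).totalDegree = 0 := totalDegree_C _
      omega
    have h2 : (L a * ((∏ b ∈ s, (L b + C (c b))) - ∏ b ∈ s, L b)).totalDegree
        < (Finset.cons a s ha).card := by
      rcases ih hL' with h0 | hlt
      · rw [h0, mul_zero]
        simp only [totalDegree_zero, Finset.card_cons]
        omega
      · refine lt_of_le_of_lt (totalDegree_mul _ _) ?_
        rw [Finset.card_cons]
        omega
    exact lt_of_le_of_lt (totalDegree_add _ _) (max_lt h2 h1)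

lemma card_UP : 2 * (UP n).card = n * n - n := by
  classical
  have h1 : ((univ ×ˢ univ : Finset (Fin n × Fin n)).filter (fun q => q.2 < q.1)) =
      (UP n).image Prod.swap := by
    ext ⟨i, j⟩
    simp only [Finset.mem_filter, Finset.mem_product, Finset.mem_univ, true_and,
      Finset.mem_image, mem_UP]
    constructor
    · intro h
      exact ⟨(j, i), h, rfl⟩
    · rintro ⟨⟨u, v⟩, huv, h⟩
      cases h
      exact huv
  have h2 : (UP n) ∪ ((univ ×ˢ univ : Finset (Fin n × Fin n)).filter (fun q => q.2 < q.1)) =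
      (univ : Finset (Fin n)).offDiag := by
    ext ⟨i, j⟩
    simp only [Finset.mem_union, mem_UP, Finset.mem_filter, Finset.mem_product,
      Finset.mem_univ, true_and, Finset.mem_offDiag, ne_eq]
    constructor
    · rintro (h | h)
      · exact ne_of_lt h
      · exact (ne_of_lt h).symm
    · intro h
      exact lt_or_gt_of_ne h
  have hdisj : Disjoint (UP n)
      ((univ ×ˢ univ : Finset (Fin n × Fin n)).filter (fun q => q.2 < q.1)) := by
    rw [Finset.disjoint_left]
    rintro ⟨i, j⟩ hij hji
    rw [mem_UP] at hij
    simp only [Finset.mem_filter] at hji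
    exact absurd hij (not_lt_of_gt hji.2)
  have hcard := congrArg Finset.card h2
  rw [Finset.card_union_of_disjoint hdisj, h1,
    Finset.card_image_of_injective _ Prod.swap_injective, Finset.offDiag_card,
    Finset.card_univ, Fintype.card_fin] at hcard
  omega


end SeatingAux


open SeatingAux in
theorem seating_couples_prime (n : ℕ) (p : ℕ) (hp : p.Prime) (hpn : p = 2 * n + 1)
    (d : Fin n → ZMod p) (hd : ∀ i, d i ≠ 0) :
    ∃ (a b : Fin n → ZMod p) (σ : Equiv.Perm (Fin n)),
      Function.Injective (Sum.elim a b) ∧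
      Set.range (Sum.elim a b) = {0}ᶜ ∧
      ∀ i, a i - b i = d (σ i) ∨ b i - a i = d (σ i) := by
  classical
  haveI : Fact p.Prime := ⟨hp⟩
  haveI : NeZero p := ⟨hp.pos.ne'⟩
  have hn : 1 ≤ n := by
    by_contra h
    push_neg at h
    interval_cases n
    rw [hpn] at hp
    norm_num at hp
  set tt : Finset ((Fin n × Fin 2) ⊕ ((Fin n × Fin n) × Fin 4)) :=
    (univ : Finset (Fin n × Fin 2)).disjSum ((UP n) ×ˢ (univ : Finset (Fin 4))) with htt
  set L : ((Fin n × Fin 2) ⊕ ((Fin n × Fin n) × Fin 4)) → MvPolynomial (Fin n) (ZMod p) :=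
    fun γ => Sum.elim (fun iw => X iw.1) (fun qk => X qk.1.1 - X qk.1.2) γ with hLdef
  set cc : ((Fin n × Fin 2) ⊕ ((Fin n × Fin n) × Fin 4)) → ZMod p :=
    fun γ => Sum.elim (fun iw => if iw.2 = 0 then 0 else d iw.1)
      (fun qk => ![0, d qk.1.1 - d qk.1.2, -(d qk.1.2), d qk.1.1] qk.2) γ with hccdef
  have hL1 : ∀ γ ∈ tt, (L γ).totalDegree ≤ 1 := by
    rintro (iw | qk) _
    · simp only [hLdef, Sum.elim_inl]
      exact le_of_eq (totalDegree_X _)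
    · simp only [hLdef, Sum.elim_inr]
      refine le_trans (totalDegree_sub _ _) ?_
      exact max_le (le_of_eq (totalDegree_X _)) (le_of_eq (totalDegree_X _))
  have hcard : tt.card = 2 * n * n := by
    have hup := card_UP (n := n)
    rw [htt, Finset.card_disjSum, Finset.card_product, Finset.card_univ, Finset.card_univ,
      Fintype.card_prod, Fintype.card_fin, Fintype.card_fin, Fintype.card_fin]
    have hr : 2 * n * n = 2 * (n * n) := by ring
    have hnn : n ≤ n * n := Nat.le_mul_of_pos_left n (by omega)
    omega
  have hqcard : Fintype.card (ZMod p) = p := ZMod.card p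
  have hsum_eq : (∑ x : Fin n → ZMod p, eval x (∏ γ ∈ tt, (L γ + C (cc γ)))) =
      ∑ x : Fin n → ZMod p, eval x (∏ γ ∈ tt, L γ) := by
    rcases prod_sub_prod tt L cc hL1 with h0 | hlt
    · rw [sub_eq_zero] at h0
      rw [h0]
    · have hdeg : ((∏ γ ∈ tt, (L γ + C (cc γ))) - ∏ γ ∈ tt, L γ).totalDegree <
          (Fintype.card (ZMod p) - 1) * Fintype.card (Fin n) := by
      -- (p-1)*n = 2n*n
        rw [hqcard, Fintype.card_fin]
        have h2 : (p - 1) * n = 2 * n * n := by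
          have : p - 1 = 2 * n := by omega
          rw [this]
        rw [h2, ← hcard]
        exact hlt
      have hz := MvPolynomial.sum_eval_eq_zero _ hdeg
      have hz' : (∑ x : Fin n → ZMod p, eval x (∏ γ ∈ tt, (L γ + C (cc γ)))) -
          (∑ x : Fin n → ZMod p, eval x (∏ γ ∈ tt, L γ)) = 0 := by
        rw [← Finset.sum_sub_distrib, ← hz]
        exact Finset.sum_congr rfl fun x _ => (map_sub (eval x) _ _).symm
      exact sub_eq_zero.mp hz'
  have hGev : ∀ x : Fin n → ZMod p, eval x (∏ γ ∈ tt, L γ) =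
      (∏ c, x c ^ 2) * det (NW (fun ρ : Idx n => x ρ.1)) := by
    intro x
    rw [map_prod, htt, Finset.prod_disjSum]
    congr 1
    · rw [Fintype.prod_prod_type]
      refine Finset.prod_congr rfl fun c _ => ?_
      rw [Fin.prod_univ_two]
      simp [hLdef, sq]
    · rw [det_NW, Finset.prod_product]
      refine Finset.prod_congr rfl fun q hq => ?_
      have hev : ∀ k : Fin 4, eval x (L (Sum.inr (q, k))) = x q.1 - x q.2 := by
        intro k
        simp [hLdef]
      have h4 : (∏ _st : Fin 2 × Fin 2, (x q.2 - x q.1)) = (x q.2 - x q.1) ^ 4 := by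
        simp
      calc (∏ k : Fin 4, eval x (L (Sum.inr (q, k))))
          = ∏ _k : Fin 4, (x q.1 - x q.2) := Finset.prod_congr rfl fun k _ => hev k
        _ = (x q.1 - x q.2) ^ 4 := by simp
        _ = (x q.2 - x q.1) ^ 4 := by ring
        _ = ∏ _st : Fin 2 × Fin 2, (x q.2 - x q.1) := h4.symm
        _ = ∏ st : Fin 2 × Fin 2, (x (q.2, st.2).1 - x (q.1, st.1).1) :=
            Finset.prod_congr rfl fun st _ => rfl
  have hT := T_eq (p := p) hpn
  have hTne : (∑ x : Fin n → ZMod p,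
      (∏ c, x c ^ 2) * det (NW (fun ρ : Idx n => x ρ.1))) ≠ 0 := by
    rw [hT]
    apply mul_ne_zero (mul_ne_zero ?_ ?_) ?_
    · rcases Int.units_eq_one_or (Equiv.Perm.sign (sg0 n)) with h | h <;> rw [h] <;> simp
    · intro hnf
      rw [ZMod.natCast_eq_zero_iff] at hnf
      have := (Nat.Prime.dvd_factorial hp).mp hnf
      omega
    · rw [Finset.prod_ne_zero_iff]
      intro c _ h0
      rw [ZMod.natCast_eq_zero_iff] at h0
      have hc4 : 4 * (c : ℕ) + 2 = 2 * (2 * (c : ℕ) + 1) := by ring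
      rw [hc4] at h0
      rcases (Nat.Prime.dvd_mul hp).mp h0 with h | h
      · have := Nat.le_of_dvd (by norm_num) h
        omega
      · have hlt := c.isLt
        have := Nat.le_of_dvd (by omega) h
        omega
  have hFne : (∑ x : Fin n → ZMod p, eval x (∏ γ ∈ tt, (L γ + C (cc γ)))) ≠ 0 := by
    rw [hsum_eq, Finset.sum_congr rfl (fun x _ => hGev x)]
    exact hTne
  obtain ⟨x, -, hx⟩ := Finset.exists_ne_zero_of_sum_ne_zero hFne
  rw [map_prod, Finset.prod_ne_zero_iff] at hx
  have ha0 : ∀ i, x i ≠ 0 := by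
    intro i
    have h := hx (Sum.inl (i, 0)) (by rw [htt]; exact Finset.inl_mem_disjSum.2 (Finset.mem_univ _))
    simpa [hLdef, hccdef] using h
  have hb0 : ∀ i, x i + d i ≠ 0 := by
    intro i
    have h := hx (Sum.inl (i, 1)) (by rw [htt]; exact Finset.inl_mem_disjSum.2 (Finset.mem_univ _))
    simpa [hLdef, hccdef] using h
  have hfac : ∀ i j : Fin n, i < j → ∀ k : Fin 4,
      x i - x j + (![0, d i - d j, -(d j), d i] k) ≠ 0 := by
    intro i j hij k
    have hmem : (Sum.inr ((i, j), k) :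
        (Fin n × Fin 2) ⊕ ((Fin n × Fin n) × Fin 4)) ∈ tt := by
      rw [htt]
      exact Finset.inr_mem_disjSum.2 (Finset.mem_product.2 ⟨mem_UP.2 hij, Finset.mem_univ _⟩)
    have h := hx _ hmem
    simpa [hLdef, hccdef] using h
  have hane : ∀ i j : Fin n, i ≠ j → x i ≠ x j := by
    intro i j hij h
    rcases lt_or_gt_of_ne hij with h' | h'
    · exact hfac i j h' 0 (by simpa using sub_eq_zero.mpr h)
    · exact hfac j i h' 0 (by simpa using sub_eq_zero.mpr h.symm)
  have hbne : ∀ i j : Fin n, i ≠ j → x i + d i ≠ x j + d j := by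
    intro i j hij h
    rcases lt_or_gt_of_ne hij with h' | h'
    · refine hfac i j h' 1 ?_
      have : x i - x j + (d i - d j) = (x i + d i) - (x j + d j) := by ring
      simpa [this] using sub_eq_zero.mpr h
    · refine hfac j i h' 1 ?_
      have : x j - x i + (d j - d i) = (x j + d j) - (x i + d i) := by ring
      simpa [this] using sub_eq_zero.mpr h.symm
  have hab : ∀ i j : Fin n, x i ≠ x j + d j := by
    intro i j h
    rcases eq_or_ne i j with rfl | hij
    · exact hd i (by linear_combination -h)
    · rcases lt_or_gt_of_ne hij with h' | h'
      · refine hfac i j h' 2 ?_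
        have : x i - x j + -(d j) = x i - (x j + d j) := by ring
        simpa [this] using sub_eq_zero.mpr h
      · refine hfac j i h' 3 ?_
        have : x j - x i + d j = (x j + d j) - x i := by ring
        simpa [this] using sub_eq_zero.mpr h.symm
  set b : Fin n → ZMod p := fun i => x i + d i with hbdef
  have hinj : Function.Injective (Sum.elim x b) := by
    rintro (i | i) (j | j) h <;> simp only [Sum.elim_inl, Sum.elim_inr, hbdef] at h
    · have : i = j := by
        by_contra hne
        exact hane i j hne h
      rw [this]
    · exact absurd h (hab i j)
    · exact absurd h.symm (hab j i)
    · have : i = j := by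
        by_contra hne
        exact hbne i j hne h
      rw [this]
  have hsubset : Set.range (Sum.elim x b) ⊆ ({0}ᶜ : Set (ZMod p)) := by
    rintro y ⟨(i | i), rfl⟩
    · simpa using ha0 i
    · simpa [hbdef] using hb0 i
  have hrange : Set.range (Sum.elim x b) = ({0}ᶜ : Set (ZMod p)) := by
    refine Set.eq_of_subset_of_ncard_le hsubset ?_ (Set.toFinite _)
    have hr : (Set.range (Sum.elim x b)).ncard = 2 * n := by
      rw [← Set.image_univ, Set.ncard_image_of_injective _ hinj, Set.ncard_univ,
        Nat.card_eq_fintype_card, Fintype.card_sum, Fintype.card_fin]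
      omega
    have hc : ({0}ᶜ : Set (ZMod p)).ncard = p - 1 := by
      have hcoe : ({0}ᶜ : Set (ZMod p)) =
          (((univ : Finset (ZMod p)).erase 0 : Finset (ZMod p)) : Set (ZMod p)) := by
        ext z
        simp
      rw [hcoe, Set.ncard_coe_finset, Finset.card_erase_of_mem (Finset.mem_univ _),
        Finset.card_univ, hqcard]
    rw [hr, hc]
    omega
  exact ⟨x, b, Equiv.refl _, hinj, hrange, fun i => Or.inr (by simp [hbdef])⟩
end

section
/- Let N = 2n and suppose there exists a partition of Z/N into n pairs with differences d_1, ..., d_n where each d_i is a unit of Z/N. Then there exist signs s_1, ..., s_n ∈ {1,-1} with s_1 d_1 + ... + s_n d_n ≡ n (mod 2n). -/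
lemma alt_sum_int (m : ℕ) : ∑ k ∈ Finset.range (2 * m), (-1 : ℤ) ^ k * k = -m := by
  induction m with
  | zero => simp
  | succ m ih =>
    have h : 2 * (m + 1) = (2 * m + 1) + 1 := by ring
    rw [h, Finset.sum_range_succ, Finset.sum_range_succ, ih]
    have h0 : (-1 : ℤ) ^ (2 * m) = 1 := Even.neg_one_pow ⟨m, by ring⟩
    have h1 : (-1 : ℤ) ^ (2 * m + 1) = -1 := Odd.neg_one_pow ⟨m, by ring⟩
    rw [h0, h1]
    push_cast
    ring

theorem signed_sum_of_partition (n : ℕ) (hn : 0 < n) (d : Fin n → ZMod (2 * n))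
    (hd : ∀ i, IsUnit (d i))
    (a b : Fin n → ZMod (2 * n)) (σ : Equiv.Perm (Fin n))
    (hbij : Function.Bijective (Sum.elim a b))
    (hdiff : ∀ i, a i - b i = d (σ i) ∨ b i - a i = d (σ i)) :
    ∃ s : Fin n → ℤ, (∀ i, s i = 1 ∨ s i = -1) ∧
      ∑ i, (s i) • d i = (n : ZMod (2 * n)) := by
  have hM : 0 < 2 * n := by omega
  haveI : NeZero (2 * n) := ⟨by omega⟩
  have hdvd : (2 : ℕ) ∣ 2 * n := ⟨n, rfl⟩
  set φ : ZMod (2 * n) →+* ZMod 2 := ZMod.castHom hdvd (ZMod 2) with hφ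
  -- g flips sign on odd elements
  set g : ZMod (2 * n) → ZMod (2 * n) := fun x => if φ x = 0 then x else -x with hg
  -- φ (d i) = 1
  have hφd : ∀ i, φ (d i) = 1 := by
    intro i
    have hu : IsUnit (φ (d i)) := (hd i).map φ
    have : φ (d i) = 0 ∨ φ (d i) = 1 := by
      have := ZMod.val_lt (φ (d i))
      rcases (φ (d i)) with ⟨v, hv⟩
      interval_cases v
      · left; rfl
      · right; rfl
    rcases this with h | h
    · exact absurd (h ▸ hu) (by simp)
    · exact h
  -- key pointwise identity
  set t : Fin n → ℤ := fun j =>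
    if φ (a j) = 0 then (if a j - b j = d (σ j) then 1 else -1)
    else (if b j - a j = d (σ j) then 1 else -1) with ht
  have htpm : ∀ j, t j = 1 ∨ t j = -1 := by
    intro j
    simp only [ht]
    split <;> split <;> simp
  have hkey : ∀ j, t j • d (σ j) = g (a j) + g (b j) := by
    intro j
    have hab : φ (a j) ≠ φ (b j) := by
      intro h
      rcases hdiff j with hh | hh
      · have := congrArg φ hh
        rw [map_sub, h, sub_self, hφd] at this
        exact one_ne_zero this.symm
      · have := congrArg φ hh
        rw [map_sub, h, sub_self, hφd] at this
        exact one_ne_zero this.symm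
    have h2 : ∀ x : ZMod 2, x = 0 ∨ x = 1 := by decide
    simp only [ht, hg]
    by_cases ha : φ (a j) = 0
    · have hb : φ (b j) ≠ 0 := fun h => hab (ha.trans h.symm)
      rw [if_pos ha, if_pos ha, if_neg hb]
      rcases hdiff j with hh | hh
      · rw [if_pos hh, one_smul, ← hh]; ring
      · by_cases hh' : a j - b j = d (σ j)
        · rw [if_pos hh', one_smul, ← hh']; ring
        · rw [if_neg hh', neg_one_smul, ← hh]; ring
    · have hb : φ (b j) = 0 := by
        rcases h2 (φ (b j)) with h | h
        · exact h
        · rcases h2 (φ (a j)) with h' | h'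
          · exact absurd h' ha
          · exact absurd (h'.trans h.symm) hab
      rw [if_neg ha, if_neg ha, if_pos hb]
      rcases hdiff j with hh | hh
      · by_cases hh' : b j - a j = d (σ j)
        · rw [if_pos hh', one_smul, ← hh']; ring
        · rw [if_neg hh', neg_one_smul, ← hh]; ring
      · rw [if_pos hh, one_smul, ← hh]; ring
  refine ⟨fun i => t (σ.symm i), fun i => htpm _, ?_⟩
  -- reindex sum by σ
  have hre : ∑ i, t (σ.symm i) • d i = ∑ j, t j • d (σ j) := by
    rw [← Equiv.sum_comp σ (fun i => t (σ.symm i) • d i)]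
    simp
  rw [hre]
  have h1 : ∑ j, (t j • d (σ j)) = ∑ j, (g (a j) + g (b j)) :=
    Finset.sum_congr rfl (fun j _ => hkey j)
  rw [h1, Finset.sum_add_distrib]
  -- sum over all of ZMod (2n)
  have h2 : (∑ j, g (a j)) + (∑ j, g (b j)) = ∑ x : ZMod (2 * n), g x := by
    have h := Fintype.sum_bijective (Sum.elim a b) hbij (fun z => g (Sum.elim a b z)) g (fun z => rfl)
    rw [Fintype.sum_sum_type] at h
    simpa using h
  rw [h2]
  -- compute the full sum
  have h3 : ∑ x : ZMod (2 * n), g x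
      = ∑ k ∈ Finset.range (2 * n), g ((k : ZMod (2 * n))) := by
    refine (Finset.sum_nbij' (fun k : ℕ => (k : ZMod (2 * n))) (fun x => x.val)
      ?_ ?_ ?_ ?_ ?_).symm
    · intro k _; exact Finset.mem_univ _
    · intro x _; exact Finset.mem_range.mpr (ZMod.val_lt x)
    · intro k hk; exact ZMod.val_cast_of_lt (Finset.mem_range.mp hk)
    · intro x _; exact ZMod.natCast_rightInverse x
    · intro k _; rfl
  rw [h3]
  have h4 : ∀ k ∈ Finset.range (2 * n),
      g ((k : ZMod (2 * n))) = (((-1 : ℤ) ^ k * k : ℤ) : ZMod (2 * n)) := by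
    intro k _
    simp only [hg]
    have hφk : φ ((k : ZMod (2 * n))) = (k : ZMod 2) := map_natCast φ k
    by_cases he : Even k
    · rw [if_pos, he.neg_one_pow]
      · push_cast; ring
      · rw [hφk, ZMod.natCast_eq_zero_iff]
        exact he.two_dvd
    · rw [if_neg, (Nat.not_even_iff_odd.mp he).neg_one_pow]
      · push_cast; ring
      · rw [hφk]
        simp only [ZMod.natCast_eq_zero_iff]
        exact fun h => he (even_iff_two_dvd.mpr h)
  rw [Finset.sum_congr rfl h4, ← Int.cast_sum, alt_sum_int]
  have : ((2 * n : ℕ) : ZMod (2 * n)) = 0 := ZMod.natCast_self _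
  push_cast at this ⊢
  linear_combination -this
end
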